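/- arXiv:1312.1497 — 3 statements merged into one kernel-verified Lean document; each statement's English description precedes it below -/
import Mathlib

section
/- For every sS_∞-invariant normal subgroup H of Z_2^{*∞}, the set C_H of all partitions p admitting a labelling l with w(p,l) ∈ H is a group-theoretical category of partitions. -/
open Classical

/-- A partition diagram with `upper` upper points and `lower` lower points; the blocks are
encoded by the equivalence relation (setoid) on the disjoint union of the points. -/
structure PartitionDiagram where
  upper : ℕ
  lower : ℕ
  rel : Setoid (Fin upper ⊕ Fin lower)

namespace PartitionDiagram

/-- The partition determined by a labelling of the points: two points lie in the same block
iff they receive the same label. -/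
def ofLabels {u l : ℕ} (f : Fin u ⊕ Fin l → ℕ) : PartitionDiagram :=
  ⟨u, l, Setoid.ker f⟩

/-- The identity partition `| ∈ P(1,1)`. -/
def idPartition : PartitionDiagram := ofLabels (u := 1) (l := 1) fun _ => 0

/-- The pair partition `⊓ ∈ P(0,2)`. -/
def pairPartition : PartitionDiagram := ofLabels (u := 0) (l := 2) fun _ => 0

/-- The four block partition `⊓⊓ ∈ P(0,4)`. -/
def fourBlock : PartitionDiagram := ofLabels (u := 0) (l := 4) fun _ => 0

/-- The singleton partition `↑ ∈ P(0,1)`. -/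
def singletonPartition : PartitionDiagram := ofLabels (u := 0) (l := 1) fun _ => 0

/-- The double singleton partition `↑⊗↑ ∈ P(0,2)`. -/
def doubleSingleton : PartitionDiagram :=
  ofLabels (u := 0) (l := 2) (Sum.elim (fun i => (i : ℕ)) fun j => (j : ℕ))

/-- The crossing partition `⨯ ∈ P(2,2)`, with blocks `{1,2'}` and `{2,1'}`. -/
def crossing : PartitionDiagram :=
  ofLabels (u := 2) (l := 2) (Sum.elim (fun i => (i : ℕ)) fun j => 1 - (j : ℕ))

/-- The pair positioner partition `▷ ∈ P(3,3)`, with blocks `{1,2,2',3'}` and `{3,1'}`. -/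
def pairPositioner : PartitionDiagram :=
  ofLabels (u := 3) (l := 3)
    (Sum.elim (fun i => if (i : ℕ) = 2 then 1 else 0) fun j => if (j : ℕ) = 0 then 1 else 0)

/-- The partition `k_l ∈ P(l+2, l+2)` consisting of the four block `{1, 1', l+2, (l+2)'}`
together with the pairs `{j, j'}` for `2 ≤ j ≤ l+1`. -/
def kPart (n : ℕ) : PartitionDiagram :=
  ofLabels (u := n + 2) (l := n + 2)
    (fun x => if (Sum.elim Fin.val Fin.val x) = 0 ∨ (Sum.elim Fin.val Fin.val x) = n + 1
      then 0 else Sum.elim Fin.val Fin.val x)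

/-- The involution `p* ∈ P(l,k)` of `p ∈ P(k,l)`: turn the partition upside down. -/
def invol (p : PartitionDiagram) : PartitionDiagram :=
  ⟨p.lower, p.upper, Setoid.comap Sum.swap p.rel⟩

/-- Auxiliary map splitting the points of a tensor product into the points of the two factors. -/
def splitPoint {a b c d : ℕ} (x : Fin (a + b) ⊕ Fin (c + d)) :
    (Fin a ⊕ Fin c) ⊕ (Fin b ⊕ Fin d) :=
  match x with
  | Sum.inl u =>
    match finSumFinEquiv.symm u with
    | Sum.inl i => Sum.inl (Sum.inl i)
    | Sum.inr i => Sum.inr (Sum.inl i)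
  | Sum.inr v =>
    match finSumFinEquiv.symm v with
    | Sum.inl j => Sum.inl (Sum.inr j)
    | Sum.inr j => Sum.inr (Sum.inr j)

/-- The tensor product (horizontal concatenation) `p ⊗ q` of two partitions. -/
def tensor (p q : PartitionDiagram) : PartitionDiagram :=
  ⟨p.upper + q.upper, p.lower + q.lower,
    Setoid.ker fun x =>
      Sum.map (Quotient.mk p.rel) (Quotient.mk q.rel) (splitPoint x)⟩

section Composition

variable (p q : PartitionDiagram) (h : p.lower = q.upper)

/-- Inclusion of the points of `p` into the three-row diagram used for composition. -/
def iotaP : Fin p.upper ⊕ Fin p.lower → Fin p.upper ⊕ (Fin p.lower ⊕ Fin q.lower) :=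
  Sum.map id Sum.inl

/-- Inclusion of the points of `q` into the three-row diagram used for composition,
identifying the upper points of `q` with the lower points of `p`. -/
def iotaQ : Fin q.upper ⊕ Fin q.lower → Fin p.upper ⊕ (Fin p.lower ⊕ Fin q.lower) :=
  fun x => Sum.inr (Sum.map (Fin.cast h.symm) id x)

/-- The generating relation on the three-row diagram used for composition. -/
def compRel : Fin p.upper ⊕ (Fin p.lower ⊕ Fin q.lower) →
    Fin p.upper ⊕ (Fin p.lower ⊕ Fin q.lower) → Prop :=
  fun x y =>
    (∃ a b, p.rel.r a b ∧ x = iotaP p q a ∧ y = iotaP p q b) ∨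
    (∃ a b, q.rel.r a b ∧ x = iotaQ p q h a ∧ y = iotaQ p q h b)

/-- The composition (vertical concatenation) `qp ∈ P(k,m)` of `p ∈ P(k,l)` and `q ∈ P(l,m)`:
identify the lower points of `p` with the upper points of `q`, take the join of the block
structures and restrict to the upper points of `p` and the lower points of `q`. -/
def comp : PartitionDiagram :=
  ⟨p.upper, q.lower,
    Setoid.comap (Sum.map id Sum.inr) (Relation.EqvGen.setoid (compRel p q h))⟩

end Composition

/-- Rotation of the leftmost upper point to the leftmost lower position. -/
def rotLU (p : PartitionDiagram) (h : 0 < p.upper) : PartitionDiagram :=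
  ⟨p.upper - 1, p.lower + 1,
    Setoid.comap (fun x => match x with
      | Sum.inl j => Sum.inl (⟨(j : ℕ) + 1, by have := j.isLt; omega⟩ : Fin p.upper)
      | Sum.inr j => if hj : (j : ℕ) = 0 then Sum.inl (⟨0, h⟩ : Fin p.upper)
          else Sum.inr (⟨(j : ℕ) - 1, by have := j.isLt; omega⟩ : Fin p.lower)) p.rel⟩

/-- Rotation of the leftmost lower point to the leftmost upper position. -/
def rotLD (p : PartitionDiagram) (h : 0 < p.lower) : PartitionDiagram :=
  ⟨p.upper + 1, p.lower - 1,
    Setoid.comap (fun x => match x with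
      | Sum.inl j => if hj : (j : ℕ) = 0 then Sum.inr (⟨0, h⟩ : Fin p.lower)
          else Sum.inl (⟨(j : ℕ) - 1, by have := j.isLt; omega⟩ : Fin p.upper)
      | Sum.inr j => Sum.inr (⟨(j : ℕ) + 1, by have := j.isLt; omega⟩ : Fin p.lower)) p.rel⟩

/-- Rotation of the rightmost upper point to the rightmost lower position. -/
def rotRU (p : PartitionDiagram) (h : 0 < p.upper) : PartitionDiagram :=
  ⟨p.upper - 1, p.lower + 1,
    Setoid.comap (fun x => match x with
      | Sum.inl j => Sum.inl (⟨(j : ℕ), by have := j.isLt; omega⟩ : Fin p.upper)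
      | Sum.inr j => if hj : (j : ℕ) < p.lower then Sum.inr (⟨(j : ℕ), hj⟩ : Fin p.lower)
          else Sum.inl (⟨p.upper - 1, by omega⟩ : Fin p.upper)) p.rel⟩

/-- Rotation of the rightmost lower point to the rightmost upper position. -/
def rotRD (p : PartitionDiagram) (h : 0 < p.lower) : PartitionDiagram :=
  ⟨p.upper + 1, p.lower - 1,
    Setoid.comap (fun x => match x with
      | Sum.inl j => if hj : (j : ℕ) < p.upper then Sum.inl (⟨(j : ℕ), hj⟩ : Fin p.upper)
          else Sum.inr (⟨p.lower - 1, by omega⟩ : Fin p.lower)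
      | Sum.inr j => Sum.inr (⟨(j : ℕ), by have := j.isLt; omega⟩ : Fin p.lower)) p.rel⟩

/-- The partition obtained from `p` by merging the block of the point `a` and the block of
the point `b` into a single block, leaving all other blocks unchanged. -/
noncomputable def mergeBlocks (p : PartitionDiagram)
    (a b : Fin p.upper ⊕ Fin p.lower) : PartitionDiagram :=
  ⟨p.upper, p.lower,
    Setoid.ker fun x =>
      if p.rel.r x a ∨ p.rel.r x b then (none : Option (Quotient p.rel))
      else some (Quotient.mk p.rel x)⟩

end PartitionDiagram

open PartitionDiagram

/-- A set of partitions is a category of partitions if it contains the identity partition and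
the pair partition and is closed under tensor products, composition, involution and the four
rotation operations. -/
structure IsPartitionCategory (M : Set PartitionDiagram) : Prop where
  id_mem : idPartition ∈ M
  pair_mem : pairPartition ∈ M
  tensor_mem : ∀ p ∈ M, ∀ q ∈ M, tensor p q ∈ M
  comp_mem : ∀ p ∈ M, ∀ q ∈ M, ∀ h : p.lower = q.upper, comp p q h ∈ M
  invol_mem : ∀ p ∈ M, invol p ∈ M
  rotLU_mem : ∀ p ∈ M, ∀ h : 0 < p.upper, rotLU p h ∈ M
  rotLD_mem : ∀ p ∈ M, ∀ h : 0 < p.lower, rotLD p h ∈ M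
  rotRU_mem : ∀ p ∈ M, ∀ h : 0 < p.upper, rotRU p h ∈ M
  rotRD_mem : ∀ p ∈ M, ∀ h : 0 < p.lower, rotRD p h ∈ M

/-- A category of partitions is group-theoretical if it contains the pair positioner
partition `▷`. -/
def IsGroupTheoreticalCategory (M : Set PartitionDiagram) : Prop :=
  IsPartitionCategory M ∧ pairPositioner ∈ M

/-- The smallest category of partitions containing a given set of partitions. -/
def generatedCategory (S : Set PartitionDiagram) : Set PartitionDiagram :=
  ⋂₀ { M | IsPartitionCategory M ∧ S ⊆ M }

/-- The group `Z_2^{*∞}`: the free product of countably many copies of the cyclic group of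
order two. -/
abbrev FreeZ2 := Monoid.CoprodI (fun _ : ℕ => Multiplicative (ZMod 2))

/-- The free generators `a_1, a_2, …` of `Z_2^{*∞}`, each of order two. -/
def gen (n : ℕ) : FreeZ2 :=
  Monoid.CoprodI.of (i := n) (Multiplicative.ofAdd (1 : ZMod 2))

/-- A labelling of a partition assigns (indices of) pairwise distinct generators of
`Z_2^{*∞}` to the blocks: two points receive the same label iff they lie in the same block. -/
def IsLabelling (p : PartitionDiagram) (lab : Fin p.upper ⊕ Fin p.lower → ℕ) : Prop :=
  ∀ x y, lab x = lab y ↔ p.rel.r x y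

/-- The word `w(p,l) ∈ Z_2^{*∞}` of a labelled partition: after rotating all upper points to
the right-hand end of the lower row, read off the generators assigned to the points from left
to right, i.e. read the lower points from left to right and then the upper points from right
to left. -/
def wordOf (p : PartitionDiagram) (lab : Fin p.upper ⊕ Fin p.lower → ℕ) : FreeZ2 :=
  ((List.ofFn fun j : Fin p.lower => gen (lab (Sum.inr j))) ++
    (List.ofFn fun i : Fin p.upper => gen (lab (Sum.inl i))).reverse).prod

/-- `F(C) ⊆ Z_2^{*∞}` is the set of all `w(p,l)` where `p ∈ C` and `l` is a labelling. -/
def Fmap (M : Set PartitionDiagram) : Set FreeZ2 :=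
  { g | ∃ p ∈ M, ∃ lab, IsLabelling p lab ∧ wordOf p lab = g }

/-- The set of partitions admitting a labelling whose word lies in `H`. -/
def catOf (H : Set FreeZ2) : Set PartitionDiagram :=
  { p | ∃ lab, IsLabelling p lab ∧ wordOf p lab ∈ H }

/-- The endomorphism of `Z_2^{*∞}` identifying letters according to `f`, i.e. sending
`a_k` to `a_{f k}` for every `k`. -/
def identifyLetters (f : ℕ → ℕ) : Monoid.End FreeZ2 :=
  Monoid.CoprodI.lift fun i =>
    (Monoid.CoprodI.of (M := fun _ : ℕ => Multiplicative (ZMod 2)) (i := f i))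

/-- The strong symmetric semigroup `sS_∞`: the subsemigroup of `End(Z_2^{*∞})` generated by
the finite identifications of letters. -/
def strongSymmetricSemigroup : Subsemigroup (Monoid.End FreeZ2) :=
  Subsemigroup.closure
    { φ | ∃ f : ℕ → ℕ, (∃ n : ℕ, ∀ k, n ≤ k → f k = k) ∧ φ = identifyLetters f }

/-- A subset of `Z_2^{*∞}` is `sS_∞`-invariant if it is preserved by every element of the
strong symmetric semigroup. -/
def IsSSInvariant (H : Set FreeZ2) : Prop :=
  ∀ φ ∈ strongSymmetricSemigroup, ∀ g ∈ H, φ g ∈ H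

/-- A partition is in single leg form if it has no upper points and no two consecutive
points belong to the same block. -/
def IsSingleLeg (p : PartitionDiagram) : Prop :=
  p.upper = 0 ∧
    ∀ i j : Fin p.lower, (j : ℕ) = (i : ℕ) + 1 → ¬ p.rel.r (Sum.inr i) (Sum.inr j)

/-- `C_sl`: the set of all partitions in `C` with no upper points in single leg form. -/
def slSet (M : Set PartitionDiagram) : Set PartitionDiagram :=
  { p ∈ M | IsSingleLeg p }

/-- The partition with no upper points determined by a word (a list of letters): two points
lie in the same block iff the corresponding letters coincide. -/
def wordPartition (w : List ℕ) : PartitionDiagram :=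
  ofLabels (u := 0) (l := w.length) (Sum.elim (fun i => (i : ℕ)) fun j => w.get j)

/-- The canonical letter of the block of a lower point: the least index of a point in its
block. -/
noncomputable def blockLabel (p : PartitionDiagram) (j : Fin p.lower) : ℕ :=
  sInf { i : ℕ | ∃ h : i < p.lower, p.rel.r (Sum.inr ⟨i, h⟩) (Sum.inr j) }

/-- The canonical word of a partition with no upper points. -/
noncomputable def canonWord (p : PartitionDiagram) : List ℕ :=
  List.ofFn fun j : Fin p.lower => blockLabel p j

/-- Full reduction of a word over an alphabet of involutions: repeatedly delete adjacent
equal pairs of letters.  This computes the result of iterating the operation replacing every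
exponent in the run-decomposition of the word by its parity. -/
def reduceWord (w : List ℕ) : List ℕ :=
  w.foldr (fun x acc => match acc with
    | [] => [x]
    | y :: rest => if x = y then rest else x :: y :: rest) []

/-- The single leg version of a partition with no upper points: the unique partition in
single leg form obtained by iteratively replacing every exponent in its run-decomposition by
its parity. -/
noncomputable def singleLegVersion (p : PartitionDiagram) : PartitionDiagram :=
  wordPartition (reduceWord (canonWord p))

section Helpers

lemma gen_mul_self (n : ℕ) : gen n * gen n = 1 := by
  rw [gen, ← MonoidHom.map_mul]
  have h : (Multiplicative.ofAdd (1 : ZMod 2)) * (Multiplicative.ofAdd (1 : ZMod 2)) = 1 := by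
    decide
  rw [h, MonoidHom.map_one]

lemma gen_inv (n : ℕ) : (gen n)⁻¹ = gen n :=
  inv_eq_of_mul_eq_one_right (gen_mul_self n)

/-- The word of a list of letters. -/
def toWord (ws : List ℕ) : FreeZ2 := (ws.map gen).prod

@[simp] lemma toWord_nil : toWord [] = 1 := rfl

@[simp] lemma toWord_cons (c : ℕ) (ws : List ℕ) : toWord (c :: ws) = gen c * toWord ws := by
  simp [toWord]

@[simp] lemma toWord_append (a b : List ℕ) : toWord (a ++ b) = toWord a * toWord b := by
  simp [toWord]

@[simp] lemma toWord_singleton (c : ℕ) : toWord [c] = gen c := by simp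

lemma toWord_reverse (ws : List ℕ) : toWord ws.reverse = (toWord ws)⁻¹ := by
  induction ws with
  | nil => simp
  | cons c ws ih =>
    rw [List.reverse_cons, toWord_append, ih, toWord_singleton, toWord_cons,
      mul_inv_rev, gen_inv]

lemma identifyLetters_gen (f : ℕ → ℕ) (c : ℕ) : identifyLetters f (gen c) = gen (f c) := by
  rw [identifyLetters, gen, gen]; exact Monoid.CoprodI.lift_of _ _

lemma identifyLetters_toWord (f : ℕ → ℕ) (ws : List ℕ) :
    identifyLetters f (toWord ws) = toWord (ws.map f) := by
  induction ws with
  | nil => simp [toWord]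
  | cons c ws ih => rw [toWord_cons, map_mul, ih, identifyLetters_gen, List.map_cons, toWord_cons]

/-- The letters of the lower row, left to right. -/
def lowWord (p : PartitionDiagram) (lab : Fin p.upper ⊕ Fin p.lower → ℕ) : List ℕ :=
  List.ofFn fun j : Fin p.lower => lab (Sum.inr j)

/-- The letters of the upper row, left to right. -/
def upWord (p : PartitionDiagram) (lab : Fin p.upper ⊕ Fin p.lower → ℕ) : List ℕ :=
  List.ofFn fun i : Fin p.upper => lab (Sum.inl i)

lemma wordOf_eq_toWord (p : PartitionDiagram) (lab : Fin p.upper ⊕ Fin p.lower → ℕ) :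
    wordOf p lab = toWord (lowWord p lab ++ (upWord p lab).reverse) := by
  simp only [wordOf, toWord, lowWord, upWord, List.map_append, List.map_ofFn,
    List.map_reverse, Function.comp_def]

end Helpers
section Helpers2

lemma identifyLetters_mem_sS (f : ℕ → ℕ) (hf : ∃ n : ℕ, ∀ k, n ≤ k → f k = k) :
    identifyLetters f ∈ strongSymmetricSemigroup :=
  Subsemigroup.subset_closure ⟨f, hf, rfl⟩

lemma wordOf_relabel (p : PartitionDiagram) (lab : Fin p.upper ⊕ Fin p.lower → ℕ)
    (f : ℕ → ℕ) : wordOf p (f ∘ lab) = identifyLetters f (wordOf p lab) := by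
  rw [wordOf_eq_toWord, wordOf_eq_toWord, identifyLetters_toWord]
  congr 1
  simp [lowWord, upWord, List.map_ofFn, Function.comp_def]

lemma exists_labBound (p : PartitionDiagram) (lab : Fin p.upper ⊕ Fin p.lower → ℕ) :
    ∃ N, ∀ x, lab x < N :=
  ⟨(Finset.univ.sup lab) + 1, fun x => Nat.lt_succ_of_le (Finset.le_sup (Finset.mem_univ x))⟩

lemma isLabelling_comp {p : PartitionDiagram} {lab : Fin p.upper ⊕ Fin p.lower → ℕ}
    (hl : IsLabelling p lab) {f : ℕ → ℕ}
    (hf : ∀ x y, f (lab x) = f (lab y) → lab x = lab y) : IsLabelling p (f ∘ lab) := by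
  intro x y
  constructor
  · intro h; exact (hl x y).1 (hf x y h)
  · intro h; exact congrArg f ((hl x y).2 h)

/-- The shift function used to make label sets disjoint. -/
def shiftF (N : ℕ) : ℕ → ℕ := fun k => if k < N then k + N else k

lemma shiftF_evId (N : ℕ) : ∃ n : ℕ, ∀ k, n ≤ k → shiftF N k = k :=
  ⟨N, fun k hk => by simp [shiftF, Nat.not_lt.2 hk]⟩

lemma shiftF_inj_lt {N a b : ℕ} (ha : a < N) (hb : b < N) (h : shiftF N a = shiftF N b) :
    a = b := by
  simp only [shiftF, if_pos ha, if_pos hb] at h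
  omega

lemma shiftF_ge {N a : ℕ} (ha : a < N) : N ≤ shiftF N a := by
  simp [shiftF, if_pos ha]

end Helpers2

section Main

variable {H : Subgroup FreeZ2}

lemma identify_mem (hInv : IsSSInvariant (H : Set FreeZ2)) (f : ℕ → ℕ)
    (hf : ∃ n : ℕ, ∀ k, n ≤ k → f k = k) {g : FreeZ2} (hg : g ∈ H) :
    identifyLetters f g ∈ H :=
  hInv _ (identifyLetters_mem_sS f hf) g hg

lemma catOf_id_mem : idPartition ∈ catOf (H : Set FreeZ2) := by
  refine ⟨fun _ => 0, fun x y => Iff.rfl, ?_⟩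
  have : wordOf idPartition (fun _ => 0) = 1 := by
    simp [wordOf, idPartition, ofLabels, List.ofFn_succ, gen_mul_self]
  rw [this]; exact H.one_mem

end Main
section Main2

variable {H : Subgroup FreeZ2}

lemma catOf_pair_mem : pairPartition ∈ catOf (H : Set FreeZ2) := by
  refine ⟨fun _ => 0, fun x y => Iff.rfl, ?_⟩
  have : wordOf pairPartition (fun _ => 0) = 1 := by
    simp [wordOf, pairPartition, ofLabels, List.ofFn_succ, gen_mul_self]
  rw [this]; exact H.one_mem

lemma catOf_pairPositioner_mem : pairPositioner ∈ catOf (H : Set FreeZ2) := by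
  refine ⟨Sum.elim (fun i => if (i : ℕ) = 2 then 1 else 0)
    (fun j => if (j : ℕ) = 0 then 1 else 0), fun x y => Iff.rfl, ?_⟩
  have : wordOf pairPositioner (Sum.elim (fun i => if (i : ℕ) = 2 then 1 else 0)
      (fun j => if (j : ℕ) = 0 then 1 else 0)) = 1 := by
    simp only [wordOf, pairPositioner, ofLabels, List.ofFn_succ, List.ofFn_zero]
    simp only [Sum.elim_inl, Sum.elim_inr, Fin.val_zero, Fin.val_succ]
    norm_num
    rw [gen_mul_self 0, mul_one, ← mul_assoc (gen 0) (gen 0), gen_mul_self 0, one_mul,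
      gen_mul_self 1]
  rw [this]; exact H.one_mem

lemma catOf_invol_mem (p : PartitionDiagram) (hp : p ∈ catOf (H : Set FreeZ2)) :
    invol p ∈ catOf (H : Set FreeZ2) := by
  obtain ⟨lab, hlab, hw⟩ := hp
  refine ⟨lab ∘ Sum.swap, fun x y => hlab _ _, ?_⟩
  have : wordOf (invol p) (lab ∘ Sum.swap) = (wordOf p lab)⁻¹ := by
    rw [wordOf_eq_toWord, wordOf_eq_toWord]
    have h1 : lowWord (invol p) (lab ∘ Sum.swap) = upWord p lab := rfl
    have h2 : upWord (invol p) (lab ∘ Sum.swap) = lowWord p lab := rfl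
    rw [h1, h2, toWord_append, toWord_append, toWord_reverse, toWord_reverse,
      mul_inv_rev, inv_inv]
  rw [this]; exact H.inv_mem hw

end Main2
section Rot

variable {H : Subgroup FreeZ2}

lemma isLabelling_mk_comap {u l u' l' : ℕ} (s : Setoid (Fin u ⊕ Fin l))
    (g : Fin u' ⊕ Fin l' → Fin u ⊕ Fin l) (lab : Fin u ⊕ Fin l → ℕ)
    (hlab : ∀ x y, lab x = lab y ↔ s.r x y) :
    IsLabelling ⟨u', l', Setoid.comap g s⟩ (lab ∘ g) :=
  fun x y => hlab _ _

lemma catOf_rotLU_mem (hN : H.Normal) :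
    ∀ p ∈ catOf (H : Set FreeZ2), ∀ h : 0 < p.upper, rotLU p h ∈ catOf (H : Set FreeZ2) := by
  rintro ⟨u, l, rel⟩ ⟨lab, hlab, hw⟩ h
  simp only at h hlab hw lab
  obtain ⟨u, rfl⟩ : ∃ u', u = u' + 1 := ⟨u - 1, by omega⟩
  refine ⟨lab ∘ _, isLabelling_mk_comap rel _ lab hlab, ?_⟩
  rw [wordOf_eq_toWord]
  dsimp only [rotLU, lowWord, upWord]
  rw [List.ofFn_succ]
  simp only [Fin.val_zero, Fin.val_succ, Fin.mk_zero, Function.comp_apply, dif_pos,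
    Nat.add_sub_cancel, Fin.eta, Nat.succ_ne_zero, dif_neg, Fin.isValue]
  simp only [Fin.coe_cast, Fin.val_zero, Fin.val_succ, Nat.add_sub_cancel, Fin.eta,
    Nat.succ_ne_zero, dif_neg, dite_true, reduceDIte, not_false_iff]
  have h2 : gen (lab (Sum.inl 0)) * (wordOf ⟨u+1,l,rel⟩ lab) * (gen (lab (Sum.inl 0)))⁻¹ ∈ H :=
    hN.conj_mem _ hw _
  convert h2 using 1
  rw [wordOf_eq_toWord]
  simp only [lowWord, upWord]
  rw [List.ofFn_succ, List.reverse_cons]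
  simp only [toWord_append, toWord_cons, toWord_singleton, gen_inv, mul_assoc, gen_mul_self,
    mul_one]
  simp only [toWord_nil, one_mul, gen_mul_self, mul_one]
  rfl

end Rot

section Rot2
variable {H : Subgroup FreeZ2}

lemma catOf_rotLD_mem (hN : H.Normal) :
    ∀ p ∈ catOf (H : Set FreeZ2), ∀ h : 0 < p.lower, rotLD p h ∈ catOf (H : Set FreeZ2) := by
  rintro ⟨u, l, rel⟩ ⟨lab, hlab, hw⟩ h
  simp only at h hlab hw lab
  obtain ⟨l, rfl⟩ : ∃ l', l = l' + 1 := ⟨l - 1, by omega⟩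
  refine ⟨lab ∘ _, isLabelling_mk_comap rel _ lab hlab, ?_⟩
  rw [wordOf_eq_toWord]
  simp only [rotLD, lowWord, upWord]
  rw [List.ofFn_succ]
  simp only [Fin.coe_cast, Fin.val_zero, Fin.val_succ, Fin.mk_zero, Function.comp_apply,
    Nat.add_sub_cancel, Fin.eta, Nat.succ_ne_zero, dif_neg, dif_pos, dite_true, reduceDIte,
    not_false_iff, Fin.isValue]
  have h2 : (gen (lab (Sum.inr 0)))⁻¹ * (wordOf ⟨u, l+1, rel⟩ lab) *
      ((gen (lab (Sum.inr 0)))⁻¹)⁻¹ ∈ H := hN.conj_mem _ hw _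
  convert h2 using 1
  rw [wordOf_eq_toWord]
  simp only [lowWord, upWord]
  rw [List.ofFn_succ]
  simp only [toWord_append, toWord_cons, toWord_singleton, toWord_nil, gen_inv, mul_assoc,
    gen_mul_self, mul_one, one_mul, inv_inv, List.reverse_cons]
  rw [← mul_assoc (gen _) (gen _), gen_mul_self, one_mul]
  rfl

end Rot2

section Rot3
variable {H : Subgroup FreeZ2}

lemma catOf_rotRU_mem :
    ∀ p ∈ catOf (H : Set FreeZ2), ∀ h : 0 < p.upper, rotRU p h ∈ catOf (H : Set FreeZ2) := by
  rintro ⟨u, l, rel⟩ ⟨lab, hlab, hw⟩ h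
  simp only at h hlab hw lab
  obtain ⟨u, rfl⟩ : ∃ u', u = u' + 1 := ⟨u - 1, by omega⟩
  refine ⟨lab ∘ _, isLabelling_mk_comap rel _ lab hlab, ?_⟩
  rw [wordOf_eq_toWord]
  dsimp only [rotRU, lowWord, upWord]
  rw [List.ofFn_succ']
  simp only [Function.comp_apply, Fin.coe_cast, Fin.coe_castSucc, Fin.is_lt, Fin.val_last,
    lt_self_iff_false, Fin.eta, dif_pos, dif_neg, dite_true, dite_false, not_false_iff,
    Nat.add_sub_cancel, Fin.isValue]
  simp only [List.concat_eq_append, List.reverse_append, List.reverse_singleton,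
    List.singleton_append, toWord_append, toWord_cons, toWord_singleton, toWord_nil,
    mul_assoc, mul_one, one_mul]
  convert hw using 1
  rw [wordOf_eq_toWord]
  simp only [lowWord, upWord]
  rw [List.ofFn_succ']
  simp only [List.concat_eq_append, List.reverse_append, List.reverse_singleton,
    List.singleton_append, toWord_append, toWord_cons, toWord_singleton, toWord_nil,
    mul_assoc, mul_one, one_mul]
  rfl

lemma catOf_rotRD_mem :
    ∀ p ∈ catOf (H : Set FreeZ2), ∀ h : 0 < p.lower, rotRD p h ∈ catOf (H : Set FreeZ2) := by
  rintro ⟨u, l, rel⟩ ⟨lab, hlab, hw⟩ h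
  simp only at h hlab hw lab
  obtain ⟨l, rfl⟩ : ∃ l', l = l' + 1 := ⟨l - 1, by omega⟩
  refine ⟨lab ∘ _, isLabelling_mk_comap rel _ lab hlab, ?_⟩
  rw [wordOf_eq_toWord]
  dsimp only [rotRD, lowWord, upWord]
  rw [List.ofFn_succ']
  simp only [Function.comp_apply, Fin.coe_cast, Fin.coe_castSucc, Fin.is_lt, Fin.val_last,
    lt_self_iff_false, Fin.eta, dif_pos, dif_neg, dite_true, dite_false, not_false_iff,
    Nat.add_sub_cancel, Fin.isValue]
  simp only [List.concat_eq_append, List.reverse_append, List.reverse_singleton,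
    List.singleton_append, toWord_append, toWord_cons, toWord_singleton, toWord_nil,
    mul_assoc, mul_one, one_mul]
  convert hw using 1
  rw [wordOf_eq_toWord]
  simp only [lowWord, upWord]
  rw [List.ofFn_succ']
  simp only [List.concat_eq_append, List.reverse_append, List.reverse_singleton,
    List.singleton_append, toWord_append, toWord_cons, toWord_singleton, toWord_nil,
    mul_assoc, mul_one, one_mul]
  rfl

end Rot3
section SP
@[simp] lemma splitPoint_inl_castAdd {a b c d : ℕ} (i : Fin a) :
    splitPoint (a:=a) (b:=b) (c:=c) (d:=d) (Sum.inl (Fin.castAdd b i)) = Sum.inl (Sum.inl i) := by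
  simp [splitPoint]

@[simp] lemma splitPoint_inl_natAdd {a b c d : ℕ} (i : Fin b) :
    splitPoint (a:=a) (b:=b) (c:=c) (d:=d) (Sum.inl (Fin.natAdd a i)) = Sum.inr (Sum.inl i) := by
  simp [splitPoint]

@[simp] lemma splitPoint_inr_castAdd {a b c d : ℕ} (i : Fin c) :
    splitPoint (a:=a) (b:=b) (c:=c) (d:=d) (Sum.inr (Fin.castAdd d i)) = Sum.inl (Sum.inr i) := by
  simp [splitPoint]

@[simp] lemma splitPoint_inr_natAdd {a b c d : ℕ} (i : Fin d) :
    splitPoint (a:=a) (b:=b) (c:=c) (d:=d) (Sum.inr (Fin.natAdd c i)) = Sum.inr (Sum.inr i) := by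
  simp [splitPoint]
end SP
section Tensor
variable {H : Subgroup FreeZ2}

lemma catOf_tensor_mem (hN : H.Normal) (hInv : IsSSInvariant (H : Set FreeZ2)) :
    ∀ p ∈ catOf (H : Set FreeZ2), ∀ q ∈ catOf (H : Set FreeZ2),
      tensor p q ∈ catOf (H : Set FreeZ2) := by
  rintro p ⟨labp, hlp, hwp⟩ q ⟨labq0, hlq0, hwq0⟩
  obtain ⟨N, hbp⟩ := exists_labBound p labp
  obtain ⟨M, hbq⟩ := exists_labBound q labq0
  set K := max N M with hK
  have hbp' : ∀ x, labp x < K := fun x => lt_of_lt_of_le (hbp x) (le_max_left N M)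
  have hbq' : ∀ x, labq0 x < K := fun x => lt_of_lt_of_le (hbq x) (le_max_right N M)
  set labq : Fin q.upper ⊕ Fin q.lower → ℕ := shiftF K ∘ labq0 with hlabq
  have hlq : IsLabelling q labq :=
    isLabelling_comp hlq0 (fun x y h => shiftF_inj_lt (hbq' x) (hbq' y) h)
  have hwq : wordOf q labq ∈ H := by
    rw [hlabq, wordOf_relabel]
    exact identify_mem hInv _ (shiftF_evId K) hwq0
  have hdisj : ∀ x y, labp x ≠ labq y := by
    intro x y hxy
    have h1 : K ≤ labq y := shiftF_ge (hbq' y)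
    have h2 := hbp' x
    omega
  refine ⟨fun x => Sum.elim labp labq (splitPoint x), ?_, ?_⟩
  · intro x y
    show _ ↔ Sum.map _ _ (splitPoint x) = Sum.map _ _ (splitPoint y)
    rcases hsx : splitPoint x with a | a <;> rcases hsy : splitPoint y with b | b <;>
      simp only [hsx, hsy, Sum.elim_inl, Sum.elim_inr, Sum.map_inl, Sum.map_inr]
    · rw [Sum.inl.injEq, Quotient.eq]
      exact hlp a b
    · simp only [reduceCtorEq, iff_false]
      exact hdisj a b
    · simp only [reduceCtorEq, iff_false]
      exact fun hh => hdisj b a hh.symm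
    · rw [Sum.inr.injEq, Quotient.eq]
      exact hlq a b
  · have hlow : lowWord (tensor p q) (fun x => Sum.elim labp labq (splitPoint x)) =
        lowWord p labp ++ lowWord q labq := by
      simp only [lowWord, tensor]
      rw [List.ofFn_add]
      congr 1 <;> exact congrArg List.ofFn (funext fun i => by simp [← Fin.castAdd.eq_1])
    have hup : upWord (tensor p q) (fun x => Sum.elim labp labq (splitPoint x)) =
        upWord p labp ++ upWord q labq := by
      simp only [upWord, tensor]
      rw [List.ofFn_add]
      congr 1 <;> exact congrArg List.ofFn (funext fun i => by simp [← Fin.castAdd.eq_1])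
    rw [wordOf_eq_toWord, hlow, hup]
    have key : toWord (lowWord p labp ++ lowWord q labq ++
        (upWord p labp ++ upWord q labq).reverse) =
        (toWord (lowWord p labp) * wordOf q labq * (toWord (lowWord p labp))⁻¹) *
          wordOf p labp := by
      rw [wordOf_eq_toWord, wordOf_eq_toWord, List.reverse_append]
      simp only [toWord_append, mul_assoc, inv_mul_cancel_left]
    rw [key]
    exact H.mul_mem (hN.conj_mem _ hwq _) hwp

end Tensor
section Comp
variable {H : Subgroup FreeZ2}

lemma shiftF_lt {N a : ℕ} (ha : a < N) : shiftF N a < N + N := by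
  simp only [shiftF, if_pos ha]; omega

lemma catOf_comp_mem (hN : H.Normal) (hInv : IsSSInvariant (H : Set FreeZ2)) :
    ∀ p ∈ catOf (H : Set FreeZ2), ∀ q ∈ catOf (H : Set FreeZ2), ∀ h : p.lower = q.upper,
      comp p q h ∈ catOf (H : Set FreeZ2) := by
  rintro p ⟨labp, hlp, hwp⟩ q ⟨labq0, hlq0, hwq0⟩ h
  classical
  obtain ⟨N, hbp⟩ := exists_labBound p labp
  obtain ⟨M, hbq⟩ := exists_labBound q labq0
  set K := max N M with hK
  have hbp' : ∀ x, labp x < K := fun x => lt_of_lt_of_le (hbp x) (le_max_left N M)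
  have hbq' : ∀ x, labq0 x < K := fun x => lt_of_lt_of_le (hbq x) (le_max_right N M)
  set labq : Fin q.upper ⊕ Fin q.lower → ℕ := shiftF K ∘ labq0 with hlabq
  have hlq : IsLabelling q labq :=
    isLabelling_comp hlq0 (fun x y hxy => shiftF_inj_lt (hbq' x) (hbq' y) hxy)
  have hwq : wordOf q labq ∈ H := by
    rw [hlabq, wordOf_relabel]
    exact identify_mem hInv _ (shiftF_evId K) hwq0
  have hbq2 : ∀ x, labq x < K + K := fun x => shiftF_lt (hbq' x)
  have hdisj : ∀ x y, labp x ≠ labq y := by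
    intro x y hxy
    have h1 : K ≤ labq y := shiftF_ge (hbq' y)
    have h2 := hbp' x
    omega
  -- the relation on the three-row diagram
  set R : (Fin p.upper ⊕ (Fin p.lower ⊕ Fin q.lower)) →
      (Fin p.upper ⊕ (Fin p.lower ⊕ Fin q.lower)) → Prop :=
    Relation.EqvGen (compRel p q h) with hRdef
  have hRequiv : Equivalence R := Relation.EqvGen.is_equivalence _
  -- the labels attached to the equivalence class of a point
  set cls : (Fin p.upper ⊕ (Fin p.lower ⊕ Fin q.lower)) → Set ℕ :=
    fun z => { c | (∃ a, R (iotaP p q a) z ∧ c = labp a) ∨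
      (∃ b, R (iotaQ p q h b) z ∧ c = labq b) } with hclsdef
  have hclsInv : ∀ z z', R z z' → cls z = cls z' := by
    intro z z' hzz'
    ext c
    constructor
    · rintro (⟨a, ha, rfl⟩ | ⟨b, hb, rfl⟩)
      · exact Or.inl ⟨a, hRequiv.trans ha hzz', rfl⟩
      · exact Or.inr ⟨b, hRequiv.trans hb hzz', rfl⟩
    · rintro (⟨a, ha, rfl⟩ | ⟨b, hb, rfl⟩)
      · exact Or.inl ⟨a, hRequiv.trans ha (hRequiv.symm hzz'), rfl⟩
      · exact Or.inr ⟨b, hRequiv.trans hb (hRequiv.symm hzz'), rfl⟩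
  have hRp : ∀ a a', p.rel.r a a' → R (iotaP p q a) (iotaP p q a') := by
    intro a a' haa'
    exact Relation.EqvGen.rel _ _ (Or.inl ⟨a, a', haa', rfl, rfl⟩)
  have hRq : ∀ b b', q.rel.r b b' → R (iotaQ p q h b) (iotaQ p q h b') := by
    intro b b' hbb'
    exact Relation.EqvGen.rel _ _ (Or.inr ⟨b, b', hbb', rfl, rfl⟩)
  -- the letter identification
  set f : ℕ → ℕ := fun c =>
    if hc : ∃ a, labp a = c then sInf (cls (iotaP p q hc.choose))
    else if hc2 : ∃ b, labq b = c then sInf (cls (iotaQ p q h hc2.choose))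
    else c with hfdef
  have hfp : ∀ a, f (labp a) = sInf (cls (iotaP p q a)) := by
    intro a
    have hc : ∃ a', labp a' = labp a := ⟨a, rfl⟩
    rw [hfdef]
    simp only
    rw [dif_pos hc]
    congr 1
    exact hclsInv _ _ (hRp _ _ ((hlp _ _).1 hc.choose_spec))
  have hfq : ∀ b, f (labq b) = sInf (cls (iotaQ p q h b)) := by
    intro b
    have hc : ¬ ∃ a, labp a = labq b := by rintro ⟨a, ha⟩; exact hdisj a b ha
    have hc2 : ∃ b', labq b' = labq b := ⟨b, rfl⟩
    rw [hfdef]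
    simp only
    rw [dif_neg hc, dif_pos hc2]
    congr 1
    exact hclsInv _ _ (hRq _ _ ((hlq _ _).1 hc2.choose_spec))
  have hfev : ∃ n : ℕ, ∀ k, n ≤ k → f k = k := by
    refine ⟨K + K, fun k hk => ?_⟩
    rw [hfdef]
    simp only
    rw [dif_neg, dif_neg]
    · rintro ⟨b, hb⟩; have := hbq2 b; omega
    · rintro ⟨a, ha⟩; have := hbp' a; omega
  have hNeP : ∀ a, labp a ∈ cls (iotaP p q a) :=
    fun a => Or.inl ⟨a, hRequiv.refl _, rfl⟩
  have hNeQ : ∀ b, labq b ∈ cls (iotaQ p q h b) :=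
    fun b => Or.inr ⟨b, hRequiv.refl _, rfl⟩
  have hE : ∀ z z', (cls z).Nonempty → (cls z').Nonempty →
      sInf (cls z) = sInf (cls z') → R z z' := by
    intro z z' hz hz' heq
    have h1 : sInf (cls z) ∈ cls z := Nat.sInf_mem hz
    have h2 : sInf (cls z) ∈ cls z' := heq ▸ Nat.sInf_mem hz'
    rcases h1 with ⟨a, ha, hda⟩ | ⟨b, hb, hdb⟩ <;>
      rcases h2 with ⟨a', ha', hda'⟩ | ⟨b', hb', hdb'⟩
    · exact hRequiv.trans (hRequiv.symm ha)
        (hRequiv.trans (hRp _ _ ((hlp _ _).1 (hda ▸ hda'))) ha')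
    · exact absurd (hda ▸ hdb') (hdisj a b')
    · exact absurd (hda' ▸ hdb) fun hh => hdisj a' b hh
    · exact hRequiv.trans (hRequiv.symm hb)
        (hRequiv.trans (hRq _ _ ((hlq _ _).1 (hdb ▸ hdb'))) hb')
  -- the labelling of the composed partition
  set labC : Fin p.upper ⊕ Fin q.lower → ℕ :=
    Sum.elim (fun i => f (labp (Sum.inl i))) (fun m => f (labq (Sum.inr m))) with hlabC
  have hfC : ∀ x : Fin p.upper ⊕ Fin q.lower,
      labC x = sInf (cls (Sum.map id Sum.inr x)) := by
    rintro (i | m)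
    · exact hfp (Sum.inl i)
    · exact hfq (Sum.inr m)
  have hNeC : ∀ x : Fin p.upper ⊕ Fin q.lower,
      (cls (Sum.map id Sum.inr x)).Nonempty := by
    rintro (i | m)
    · exact ⟨_, hNeP (Sum.inl i)⟩
    · exact ⟨_, hNeQ (Sum.inr m)⟩
  refine ⟨labC, ?_, ?_⟩
  · intro x y
    rw [hfC x, hfC y]
    constructor
    · intro heq
      exact hE _ _ (hNeC x) (hNeC y) heq
    · intro hr
      rw [hclsInv _ _ hr]
  · -- the word of the composition
    have hmid : ∀ j : Fin p.lower,
        f (labq (Sum.inl (Fin.cast h j))) = f (labp (Sum.inr j)) := by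
      intro j
      rw [hfq, hfp]
      rfl
    have hwp' : wordOf p (f ∘ labp) ∈ H := by
      rw [wordOf_relabel]; exact identify_mem hInv _ hfev hwp
    have hwq' : wordOf q (f ∘ labq) ∈ H := by
      rw [wordOf_relabel]; exact identify_mem hInv _ hfev hwq
    have hG : upWord q (f ∘ labq) = lowWord p (f ∘ labp) := by
      rw [upWord, lowWord, List.ofFn_congr h.symm]
      congr 1
      funext j
      exact hmid j
    have hso : wordOf (comp p q h) labC = wordOf q (f ∘ labq) * wordOf p (f ∘ labp) := by
      rw [wordOf_eq_toWord, wordOf_eq_toWord, wordOf_eq_toWord (comp p q h) labC]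
      have h1 : lowWord (comp p q h) labC = lowWord q (f ∘ labq) := rfl
      have h2 : upWord (comp p q h) labC = upWord p (f ∘ labp) := rfl
      rw [h1, h2, hG]
      simp only [toWord_append, toWord_reverse, mul_assoc, inv_mul_cancel_left]
    rw [hso]
    exact H.mul_mem hwq' hwp'

end Comp

/-- For every `sS_∞`-invariant normal subgroup `H` of `Z_2^{*∞}`, the set `C_H`
of all partitions admitting a labelling `l` with `w(p,l) ∈ H` is a group-theoretical category
of partitions. -/
theorem catOf_isGroupTheoreticalCategory (H : Subgroup FreeZ2) (hN : H.Normal)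
    (hInv : IsSSInvariant (H : Set FreeZ2)) :
    IsGroupTheoreticalCategory (catOf (H : Set FreeZ2)) :=
  ⟨⟨catOf_id_mem, catOf_pair_mem, catOf_tensor_mem hN hInv, catOf_comp_mem hN hInv,
    catOf_invol_mem, catOf_rotLU_mem hN, catOf_rotLD_mem hN, catOf_rotRU_mem,
    catOf_rotRD_mem⟩, catOf_pairPositioner_mem⟩
end

section
/- For the category of partitions C = ⟨▷⟩ generated by the pair positioner partition, F(C) is the trivial subgroup {e} of Z_2^{*∞}; equivalently, w(p,l) = e for every partition p ∈ ⟨▷⟩ and every labelling l of p. -/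
open Classical

open PartitionDiagram

namespace TrivAux

open PartitionDiagram

lemma gen_mul_self (k : ℕ) : gen k * gen k = 1 := by
  rw [gen, ← map_mul]
  have h : (Multiplicative.ofAdd (1 : ZMod 2)) * (Multiplicative.ofAdd (1 : ZMod 2)) = 1 := by
    decide
  rw [h, map_one]

lemma gen_inv (k : ℕ) : (gen k)⁻¹ = gen k :=
  inv_eq_of_mul_eq_one_right (gen_mul_self k)

lemma gen_cancel (k : ℕ) (x : FreeZ2) : gen k * (gen k * x) = x := by
  rw [← mul_assoc, gen_mul_self, one_mul]

/-- The product of the generators indexed by `f`. -/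
def W (n : ℕ) (f : Fin n → ℕ) : FreeZ2 := (List.ofFn fun i => gen (f i)).prod

lemma genprod_rev (ls : List ℕ) :
    ((ls.map gen).reverse).prod = ((ls.map gen).prod)⁻¹ := by
  induction ls with
  | nil => simp
  | cons x xs ih => simp [ih, gen_inv, mul_inv_rev]

lemma rev_W (n : ℕ) (f : Fin n → ℕ) :
    ((List.ofFn fun i => gen (f i)).reverse).prod = (W n f)⁻¹ := by
  have h : (List.ofFn fun i => gen (f i)) = (List.ofFn f).map gen := by
    rw [List.map_ofFn]; rfl
  rw [W, h, genprod_rev]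

lemma wordOf_eq (p : PartitionDiagram) (lab : Fin p.upper ⊕ Fin p.lower → ℕ) :
    wordOf p lab =
      W p.lower (fun j => lab (Sum.inr j)) * (W p.upper (fun i => lab (Sum.inl i)))⁻¹ := by
  rw [wordOf, List.prod_append, rev_W]; rfl

lemma W_succ (n : ℕ) (f : Fin (n + 1) → ℕ) :
    W (n + 1) f = gen (f 0) * W n (fun i => f i.succ) := by
  rw [W, List.ofFn_succ, List.prod_cons]; rfl

lemma W_last (n : ℕ) (f : Fin (n + 1) → ℕ) :
    W (n + 1) f = W n (fun i => f i.castSucc) * gen (f (Fin.last n)) := by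
  rw [W, List.ofFn_succ', List.concat_eq_append, List.prod_append, List.prod_cons,
    List.prod_nil, mul_one]; rfl

lemma W_add (m n : ℕ) (f : Fin (m + n) → ℕ) :
    W (m + n) f = W m (fun i => f (Fin.castAdd n i)) * W n (fun j => f (Fin.natAdd m j)) := by
  rw [W, List.ofFn_add, List.prod_append]; rfl

lemma W_cast {m n : ℕ} (h : m = n) (f : Fin n → ℕ) :
    W m (fun i => f (Fin.cast h i)) = W n f := by subst h; rfl

lemma W_congr {n : ℕ} {f g : Fin n → ℕ} (h : ∀ i, f i = g i) : W n f = W n g :=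
  congrArg (W n) (funext h)

/-- A weak labelling: constant on blocks, but possibly identifying distinct blocks. -/
def Weak (p : PartitionDiagram) (lab : Fin p.upper ⊕ Fin p.lower → ℕ) : Prop :=
  ∀ x y, p.rel.r x y → lab x = lab y

/-- The set of partitions all of whose weak labellings have trivial word. -/
def Mtriv : Set PartitionDiagram := { p | ∀ lab, Weak p lab → wordOf p lab = 1 }

lemma id_mem' : idPartition ∈ Mtriv := by
  intro lab hw
  have h : lab (Sum.inl ⟨0, by decide⟩) = lab (Sum.inr ⟨0, by decide⟩) := hw _ _ rfl
  have e : wordOf idPartition lab =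
      gen (lab (Sum.inr ⟨0, by decide⟩)) * (gen (lab (Sum.inl ⟨0, by decide⟩)) * 1) := rfl
  rw [e, h, gen_cancel]

lemma pair_mem' : pairPartition ∈ Mtriv := by
  intro lab hw
  have h : lab (Sum.inr ⟨0, by decide⟩) = lab (Sum.inr ⟨1, by decide⟩) := hw _ _ rfl
  have e : wordOf pairPartition lab =
      gen (lab (Sum.inr ⟨0, by decide⟩)) * (gen (lab (Sum.inr ⟨1, by decide⟩)) * 1) := rfl
  rw [e, h, gen_cancel]

lemma pp_mem' : pairPositioner ∈ Mtriv := by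
  intro lab hw
  have h0 : lab (Sum.inl ⟨0, by decide⟩) = lab (Sum.inr ⟨2, by decide⟩) := hw _ _ rfl
  have h1 : lab (Sum.inl ⟨1, by decide⟩) = lab (Sum.inr ⟨2, by decide⟩) := hw _ _ rfl
  have h2 : lab (Sum.inl ⟨2, by decide⟩) = lab (Sum.inr ⟨0, by decide⟩) := hw _ _ rfl
  have hr : lab (Sum.inr ⟨1, by decide⟩) = lab (Sum.inr ⟨2, by decide⟩) := hw _ _ rfl
  have e : wordOf pairPositioner lab =
      gen (lab (Sum.inr ⟨0, by decide⟩)) * (gen (lab (Sum.inr ⟨1, by decide⟩)) *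
        (gen (lab (Sum.inr ⟨2, by decide⟩)) * (gen (lab (Sum.inl ⟨2, by decide⟩)) *
          (gen (lab (Sum.inl ⟨1, by decide⟩)) * (gen (lab (Sum.inl ⟨0, by decide⟩)) * 1))))) :=
    rfl
  rw [e, h0, h1, h2, hr]
  rw [mul_one, gen_mul_self, mul_one, gen_cancel, gen_mul_self]

lemma tensor_mem' : ∀ p ∈ Mtriv, ∀ q ∈ Mtriv, tensor p q ∈ Mtriv := by
  intro p hp q hq lab hw
  -- the restrictions of `lab` to the two factors
  have wkp : Weak p (fun x => lab (Sum.elim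
      (fun i => Sum.inl (Fin.castAdd q.upper i)) (fun j => Sum.inr (Fin.castAdd q.lower j)) x)) := by
    intro x y hxy
    apply hw
    show Sum.map _ _ (splitPoint _) = Sum.map _ _ (splitPoint _)
    rcases x with i | j <;> rcases y with i' | j' <;>
      simp only [Sum.elim_inl, Sum.elim_inr, splitPoint, finSumFinEquiv_symm_apply_castAdd,
        Sum.map_inl, Sum.map_inr] <;>
      exact congrArg Sum.inl (Quot.sound hxy)
  have wkq : Weak q (fun x => lab (Sum.elim
      (fun i => Sum.inl (Fin.natAdd p.upper i)) (fun j => Sum.inr (Fin.natAdd p.lower j)) x)) := by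
    intro x y hxy
    apply hw
    show Sum.map _ _ (splitPoint _) = Sum.map _ _ (splitPoint _)
    rcases x with i | j <;> rcases y with i' | j' <;>
      simp only [Sum.elim_inl, Sum.elim_inr, splitPoint, finSumFinEquiv_symm_apply_natAdd,
        Sum.map_inl, Sum.map_inr] <;>
      exact congrArg Sum.inr (Quot.sound hxy)
  have h1 := hp _ wkp
  have h2 := hq _ wkq
  simp only [wordOf_eq, Sum.elim_inl, Sum.elim_inr] at h1 h2 ⊢
  show W (p.lower + q.lower) _ * (W (p.upper + q.upper) _)⁻¹ = 1
  rw [mul_inv_eq_one] at h1 h2 ⊢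
  exact (W_add p.lower q.lower _).trans ((congrArg₂ (· * ·) h1 h2).trans (W_add p.upper q.upper (fun i => lab (Sum.inl i))).symm)

lemma comp_mem' : ∀ p ∈ Mtriv, ∀ q ∈ Mtriv, ∀ h : p.lower = q.upper, comp p q h ∈ Mtriv := by
  intro p hp q hq hpq lab hw
  classical
  set E := Relation.EqvGen (compRel p q hpq) with hE
  set emb : Fin p.upper ⊕ Fin q.lower → Fin p.upper ⊕ (Fin p.lower ⊕ Fin q.lower) :=
    Sum.map id Sum.inr with hemb
  have hrel : ∀ x y, E (emb x) (emb y) → lab x = lab y := fun x y h => hw x y h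
  set labFull : Fin p.upper ⊕ (Fin p.lower ⊕ Fin q.lower) → ℕ :=
    fun z => if h : ∃ x, E z (emb x) then lab h.choose else 0 with hlabFull
  have hConst : ∀ z z', E z z' → labFull z = labFull z' := by
    intro z z' hzz
    by_cases h1 : ∃ x, E z (emb x)
    · have h2 : ∃ x, E z' (emb x) :=
        ⟨h1.choose, Relation.EqvGen.trans _ _ _ (Relation.EqvGen.symm _ _ hzz) h1.choose_spec⟩
      simp only [hlabFull]
      rw [dif_pos h1, dif_pos h2]
      exact hrel _ _ (Relation.EqvGen.trans _ _ _ (Relation.EqvGen.symm _ _ h1.choose_spec)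
        (Relation.EqvGen.trans _ _ _ hzz h2.choose_spec))
    · have h2 : ¬ ∃ x, E z' (emb x) := by
        rintro ⟨x, hx⟩
        exact h1 ⟨x, Relation.EqvGen.trans _ _ _ hzz hx⟩
      simp only [hlabFull]
      rw [dif_neg h1, dif_neg h2]
  have hExt : ∀ x, labFull (emb x) = lab x := by
    intro x
    have h1 : ∃ y, E (emb x) (emb y) := ⟨x, Relation.EqvGen.refl _⟩
    simp only [hlabFull]
    rw [dif_pos h1]
    exact hrel _ _ (Relation.EqvGen.symm _ _ h1.choose_spec)
  have wkp : Weak p (fun x => labFull (iotaP p q x)) := by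
    intro x y hxy
    exact hConst _ _ (Relation.EqvGen.rel _ _ (Or.inl ⟨x, y, hxy, rfl, rfl⟩))
  have wkq : Weak q (fun x => labFull (iotaQ p q hpq x)) := by
    intro x y hxy
    exact hConst _ _ (Relation.EqvGen.rel _ _ (Or.inr ⟨x, y, hxy, rfl, rfl⟩))
  have h1 := hp _ wkp
  have h2 := hq _ wkq
  simp only [wordOf_eq] at h1 h2 ⊢
  show W q.lower (fun j => lab (Sum.inr j)) * (W p.upper (fun i => lab (Sum.inl i)))⁻¹ = 1
  have e1 : (fun j : Fin q.lower => lab (Sum.inr j)) =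
      fun j => labFull (Sum.inr (Sum.inr j)) := funext fun j => (hExt (Sum.inr j)).symm
  have e2 : (fun i : Fin p.upper => lab (Sum.inl i)) =
      fun i => labFull (Sum.inl i) := funext fun i => (hExt (Sum.inl i)).symm
  rw [e1, e2]
  have ep1 : (fun j : Fin p.lower => labFull (iotaP p q (Sum.inr j))) =
      fun j => labFull (Sum.inr (Sum.inl j)) := rfl
  have ep2 : (fun i : Fin p.upper => labFull (iotaP p q (Sum.inl i))) =
      fun i => labFull (Sum.inl i) := rfl
  have eq1 : (fun j : Fin q.lower => labFull (iotaQ p q hpq (Sum.inr j))) =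
      fun j => labFull (Sum.inr (Sum.inr j)) := rfl
  have eq2 : (fun i : Fin q.upper => labFull (iotaQ p q hpq (Sum.inl i))) =
      fun i => labFull (Sum.inr (Sum.inl (Fin.cast hpq.symm i))) := rfl
  rw [ep1, ep2] at h1
  rw [eq1, eq2] at h2
  have hc : W q.upper (fun i => labFull (Sum.inr (Sum.inl (Fin.cast hpq.symm i)))) =
      W p.lower (fun j => labFull (Sum.inr (Sum.inl j))) :=
    W_cast hpq.symm (fun j => labFull (Sum.inr (Sum.inl j)))
  rw [hc] at h2
  rw [mul_inv_eq_one] at h1 h2 ⊢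
  rw [h2, h1]

lemma invol_mem' : ∀ p ∈ Mtriv, invol p ∈ Mtriv := by
  intro p hp lab hw
  have wk : Weak p (fun x => lab (Sum.swap x)) := by
    intro x y hxy
    exact hw (Sum.swap x) (Sum.swap y) (by rcases x with i | j <;> rcases y with i' | j' <;>
      exact hxy)
  have h1 := hp _ wk
  simp only [wordOf_eq, Sum.swap_inl, Sum.swap_inr] at h1 ⊢
  show W p.upper (fun j => lab (Sum.inr j)) * (W p.lower (fun i => lab (Sum.inl i)))⁻¹ = 1
  rw [mul_inv_eq_one] at h1 ⊢
  exact h1.symm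

section Rot

variable (p : PartitionDiagram)

/-- Inverse of the point map of `rotLU`. -/
def invLU (h : 0 < p.upper) : Fin p.upper ⊕ Fin p.lower → Fin (p.upper - 1) ⊕ Fin (p.lower + 1)
  | Sum.inl i => if hi : (i : ℕ) = 0 then Sum.inr ⟨0, by omega⟩
      else Sum.inl ⟨(i : ℕ) - 1, by have := i.isLt; omega⟩
  | Sum.inr j => Sum.inr ⟨(j : ℕ) + 1, by have := j.isLt; omega⟩

/-- The point map of `rotLU`. -/
def mLU (h : 0 < p.upper) : Fin (p.upper - 1) ⊕ Fin (p.lower + 1) → Fin p.upper ⊕ Fin p.lower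
  | Sum.inl j => Sum.inl ⟨(j : ℕ) + 1, by have := j.isLt; omega⟩
  | Sum.inr j => if hj : (j : ℕ) = 0 then Sum.inl ⟨0, h⟩
      else Sum.inr ⟨(j : ℕ) - 1, by have := j.isLt; omega⟩

lemma mLU_invLU (h : 0 < p.upper) (x : Fin p.upper ⊕ Fin p.lower) :
    mLU p h (invLU p h x) = x := by
  rcases x with i | j
  · by_cases hi : (i : ℕ) = 0 <;>
      simp [invLU, mLU, hi, Fin.ext_iff] <;> omega
  · simp [invLU, mLU, Fin.ext_iff]

lemma invLU_inl_zero (h : 0 < p.upper) (i : Fin p.upper) (hi : (i : ℕ) = 0) :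
    invLU p h (Sum.inl i) = Sum.inr ⟨0, by omega⟩ := by simp [invLU, hi]

lemma invLU_inl_ne (h : 0 < p.upper) (i : Fin p.upper) (hi : ¬ (i : ℕ) = 0) :
    invLU p h (Sum.inl i) = Sum.inl ⟨(i : ℕ) - 1, by have := i.isLt; omega⟩ := by
  simp [invLU, hi]

/-- Inverse of the point map of `rotLD`. -/
def invLD (h : 0 < p.lower) : Fin p.upper ⊕ Fin p.lower → Fin (p.upper + 1) ⊕ Fin (p.lower - 1)
  | Sum.inl i => Sum.inl ⟨(i : ℕ) + 1, by have := i.isLt; omega⟩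
  | Sum.inr j => if hj : (j : ℕ) = 0 then Sum.inl ⟨0, by omega⟩
      else Sum.inr ⟨(j : ℕ) - 1, by have := j.isLt; omega⟩

/-- The point map of `rotLD`. -/
def mLD (h : 0 < p.lower) : Fin (p.upper + 1) ⊕ Fin (p.lower - 1) → Fin p.upper ⊕ Fin p.lower
  | Sum.inl j => if hj : (j : ℕ) = 0 then Sum.inr ⟨0, h⟩
      else Sum.inl ⟨(j : ℕ) - 1, by have := j.isLt; omega⟩
  | Sum.inr j => Sum.inr ⟨(j : ℕ) + 1, by have := j.isLt; omega⟩

lemma mLD_invLD (h : 0 < p.lower) (x : Fin p.upper ⊕ Fin p.lower) :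
    mLD p h (invLD p h x) = x := by
  rcases x with i | j
  · simp [invLD, mLD, Fin.ext_iff]
  · by_cases hj : (j : ℕ) = 0 <;>
      simp [invLD, mLD, hj, Fin.ext_iff] <;> omega

lemma invLD_inr_zero (h : 0 < p.lower) (j : Fin p.lower) (hj : (j : ℕ) = 0) :
    invLD p h (Sum.inr j) = Sum.inl ⟨0, by omega⟩ := by simp [invLD, hj]

lemma invLD_inr_ne (h : 0 < p.lower) (j : Fin p.lower) (hj : ¬ (j : ℕ) = 0) :
    invLD p h (Sum.inr j) = Sum.inr ⟨(j : ℕ) - 1, by have := j.isLt; omega⟩ := by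
  simp [invLD, hj]

/-- Inverse of the point map of `rotRU`. -/
def invRU (h : 0 < p.upper) : Fin p.upper ⊕ Fin p.lower → Fin (p.upper - 1) ⊕ Fin (p.lower + 1)
  | Sum.inl i => if hi : (i : ℕ) < p.upper - 1 then Sum.inl ⟨(i : ℕ), hi⟩
      else Sum.inr ⟨p.lower, by omega⟩
  | Sum.inr j => Sum.inr ⟨(j : ℕ), by have := j.isLt; omega⟩

/-- The point map of `rotRU`. -/
def mRU (h : 0 < p.upper) : Fin (p.upper - 1) ⊕ Fin (p.lower + 1) → Fin p.upper ⊕ Fin p.lower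
  | Sum.inl j => Sum.inl ⟨(j : ℕ), by have := j.isLt; omega⟩
  | Sum.inr j => if hj : (j : ℕ) < p.lower then Sum.inr ⟨(j : ℕ), hj⟩
      else Sum.inl ⟨p.upper - 1, by omega⟩

lemma mRU_invRU (h : 0 < p.upper) (x : Fin p.upper ⊕ Fin p.lower) :
    mRU p h (invRU p h x) = x := by
  rcases x with i | j
  · by_cases hi : (i : ℕ) < p.upper - 1 <;>
      simp [invRU, mRU, hi, Fin.ext_iff] <;>
      · have := i.isLt; omega
  · have := j.isLt
    simp [invRU, mRU, this, Fin.ext_iff]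

lemma invRU_inl_lt (h : 0 < p.upper) (i : Fin p.upper) (hi : (i : ℕ) < p.upper - 1) :
    invRU p h (Sum.inl i) = Sum.inl ⟨(i : ℕ), hi⟩ := by simp [invRU, hi]

lemma invRU_inl_ge (h : 0 < p.upper) (i : Fin p.upper) (hi : ¬ (i : ℕ) < p.upper - 1) :
    invRU p h (Sum.inl i) = Sum.inr ⟨p.lower, by omega⟩ := by simp [invRU, hi]

/-- Inverse of the point map of `rotRD`. -/
def invRD (h : 0 < p.lower) : Fin p.upper ⊕ Fin p.lower → Fin (p.upper + 1) ⊕ Fin (p.lower - 1)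
  | Sum.inl i => Sum.inl ⟨(i : ℕ), by have := i.isLt; omega⟩
  | Sum.inr j => if hj : (j : ℕ) < p.lower - 1 then Sum.inr ⟨(j : ℕ), hj⟩
      else Sum.inl ⟨p.upper, by omega⟩

/-- The point map of `rotRD`. -/
def mRD (h : 0 < p.lower) : Fin (p.upper + 1) ⊕ Fin (p.lower - 1) → Fin p.upper ⊕ Fin p.lower
  | Sum.inl j => if hj : (j : ℕ) < p.upper then Sum.inl ⟨(j : ℕ), hj⟩
      else Sum.inr ⟨p.lower - 1, by omega⟩
  | Sum.inr j => Sum.inr ⟨(j : ℕ), by have := j.isLt; omega⟩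

lemma mRD_invRD (h : 0 < p.lower) (x : Fin p.upper ⊕ Fin p.lower) :
    mRD p h (invRD p h x) = x := by
  rcases x with i | j
  · have := i.isLt
    simp [invRD, mRD, this, Fin.ext_iff]
  · by_cases hj : (j : ℕ) < p.lower - 1 <;>
      simp [invRD, mRD, hj, Fin.ext_iff] <;>
      · have := j.isLt; omega

lemma invRD_inr_lt (h : 0 < p.lower) (j : Fin p.lower) (hj : (j : ℕ) < p.lower - 1) :
    invRD p h (Sum.inr j) = Sum.inr ⟨(j : ℕ), hj⟩ := by simp [invRD, hj]

lemma invRD_inr_ge (h : 0 < p.lower) (j : Fin p.lower) (hj : ¬ (j : ℕ) < p.lower - 1) :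
    invRD p h (Sum.inr j) = Sum.inl ⟨p.upper, by omega⟩ := by simp [invRD, hj]

end Rot

lemma rotLU_mem' : ∀ p ∈ Mtriv, ∀ h : 0 < p.upper, rotLU p h ∈ Mtriv := by
  intro p hp h lab hw
  have hiff : ∀ a b, (rotLU p h).rel.r a b ↔ p.rel.r (mLU p h a) (mLU p h b) :=
    fun a b => Iff.rfl
  have wk : Weak p (fun x => lab (invLU p h x)) := by
    intro x y hxy
    apply hw
    refine (hiff _ _).mpr ?_
    rw [mLU_invLU, mLU_invLU]
    exact hxy
  have h1 := hp _ wk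
  simp only [wordOf_eq] at h1 ⊢
  have hu : p.upper - 1 + 1 = p.upper := by omega
  have e1 : (fun j : Fin p.lower => lab (invLU p h (Sum.inr j))) =
      fun j => lab (Sum.inr j.succ) := rfl
  have e2 : W p.upper (fun i => lab (invLU p h (Sum.inl i))) =
      gen (lab (Sum.inr (0 : Fin (p.lower + 1)))) *
        W (p.upper - 1) (fun i => lab (Sum.inl i)) := by
    rw [← W_cast hu (fun i => lab (invLU p h (Sum.inl i))), W_succ]
    congr 1
  rw [e1, e2] at h1
  show W (p.lower + 1) (fun j => lab (Sum.inr j)) *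
    (W (p.upper - 1) (fun i => lab (Sum.inl i)))⁻¹ = 1
  simp only [W_succ]
  rw [mul_inv_eq_one] at h1 ⊢
  rw [h1, ← mul_assoc, gen_mul_self, one_mul]

lemma rotLD_mem' : ∀ p ∈ Mtriv, ∀ h : 0 < p.lower, rotLD p h ∈ Mtriv := by
  intro p hp h lab hw
  have hiff : ∀ a b, (rotLD p h).rel.r a b ↔ p.rel.r (mLD p h a) (mLD p h b) :=
    fun a b => Iff.rfl
  have wk : Weak p (fun x => lab (invLD p h x)) := by
    intro x y hxy
    apply hw
    refine (hiff _ _).mpr ?_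
    rw [mLD_invLD, mLD_invLD]
    exact hxy
  have h1 := hp _ wk
  simp only [wordOf_eq] at h1 ⊢
  have hl : p.lower - 1 + 1 = p.lower := by omega
  have e2 : (fun i : Fin p.upper => lab (invLD p h (Sum.inl i))) =
      fun i => lab (Sum.inl i.succ) := rfl
  have e1 : W p.lower (fun j => lab (invLD p h (Sum.inr j))) =
      gen (lab (Sum.inl (0 : Fin (p.upper + 1)))) *
        W (p.lower - 1) (fun j => lab (Sum.inr j)) := by
    rw [← W_cast hl (fun j => lab (invLD p h (Sum.inr j))), W_succ]
    congr 1
  rw [e1, e2] at h1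
  show W (p.lower - 1) (fun j => lab (Sum.inr j)) *
    (W (p.upper + 1) (fun i => lab (Sum.inl i)))⁻¹ = 1
  simp only [W_succ]
  rw [mul_inv_eq_one] at h1 ⊢
  rw [← h1, gen_cancel]

lemma rotRU_mem' : ∀ p ∈ Mtriv, ∀ h : 0 < p.upper, rotRU p h ∈ Mtriv := by
  intro p hp h lab hw
  have hiff : ∀ a b, (rotRU p h).rel.r a b ↔ p.rel.r (mRU p h a) (mRU p h b) :=
    fun a b => Iff.rfl
  have wk : Weak p (fun x => lab (invRU p h x)) := by
    intro x y hxy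
    apply hw
    refine (hiff _ _).mpr ?_
    rw [mRU_invRU, mRU_invRU]
    exact hxy
  have h1 := hp _ wk
  simp only [wordOf_eq] at h1 ⊢
  have hu : p.upper - 1 + 1 = p.upper := by omega
  have e1 : (fun j : Fin p.lower => lab (invRU p h (Sum.inr j))) =
      fun j => lab (Sum.inr j.castSucc) := rfl
  have e2 : W p.upper (fun i => lab (invRU p h (Sum.inl i))) =
      W (p.upper - 1) (fun i => lab (Sum.inl i)) *
        gen (lab (Sum.inr (Fin.last p.lower))) := by
    rw [← W_cast hu (fun i => lab (invRU p h (Sum.inl i))), W_last]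
    congr 1
    · apply W_congr
      intro i
      rw [invRU_inl_lt p h _ (by simpa using i.isLt)]
      try congr 1
      try simp [Fin.ext_iff]
    · have e : invRU p h (Sum.inl (Fin.cast hu (Fin.last (p.upper - 1)))) =
          Sum.inr (Fin.last p.lower) := by
        rw [invRU_inl_ge p h _ (by simp)]
        simp [Fin.ext_iff, Fin.last]
      rw [e]
      rfl
  rw [e1, e2] at h1
  show W (p.lower + 1) (fun j => lab (Sum.inr j)) *
    (W (p.upper - 1) (fun i => lab (Sum.inl i)))⁻¹ = 1
  simp only [W_last]
  rw [mul_inv_eq_one] at h1 ⊢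
  rw [h1, mul_assoc, gen_mul_self, mul_one]

lemma rotRD_mem' : ∀ p ∈ Mtriv, ∀ h : 0 < p.lower, rotRD p h ∈ Mtriv := by
  intro p hp h lab hw
  have hiff : ∀ a b, (rotRD p h).rel.r a b ↔ p.rel.r (mRD p h a) (mRD p h b) :=
    fun a b => Iff.rfl
  have wk : Weak p (fun x => lab (invRD p h x)) := by
    intro x y hxy
    apply hw
    refine (hiff _ _).mpr ?_
    rw [mRD_invRD, mRD_invRD]
    exact hxy
  have h1 := hp _ wk
  simp only [wordOf_eq] at h1 ⊢
  have hl : p.lower - 1 + 1 = p.lower := by omega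
  have e2 : (fun i : Fin p.upper => lab (invRD p h (Sum.inl i))) =
      fun i => lab (Sum.inl i.castSucc) := rfl
  have e1 : W p.lower (fun j => lab (invRD p h (Sum.inr j))) =
      W (p.lower - 1) (fun j => lab (Sum.inr j)) *
        gen (lab (Sum.inl (Fin.last p.upper))) := by
    rw [← W_cast hl (fun j => lab (invRD p h (Sum.inr j))), W_last]
    congr 1
    · apply W_congr
      intro j
      rw [invRD_inr_lt p h _ (by simpa using j.isLt)]
      try congr 1
      try simp [Fin.ext_iff]
    · have e : invRD p h (Sum.inr (Fin.cast hl (Fin.last (p.lower - 1)))) =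
          Sum.inl (Fin.last p.upper) := by
        rw [invRD_inr_ge p h _ (by simp)]
        simp [Fin.ext_iff, Fin.last]
      rw [e]
      rfl
  rw [e1, e2] at h1
  show W (p.lower - 1) (fun j => lab (Sum.inr j)) *
    (W (p.upper + 1) (fun i => lab (Sum.inl i)))⁻¹ = 1
  simp only [W_last]
  rw [mul_inv_eq_one] at h1 ⊢
  rw [← h1, mul_assoc, gen_mul_self, mul_one]

lemma Mcat : IsPartitionCategory Mtriv :=
  ⟨id_mem', pair_mem', tensor_mem', comp_mem', invol_mem',
    rotLU_mem', rotLD_mem', rotRU_mem', rotRD_mem'⟩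

end TrivAux

/-- For the category of partitions `C = ⟨▷⟩` generated by the pair positioner
partition, `F(C)` is the trivial subgroup `{e}` of `Z_2^{*∞}`: `w(p,l) = e` for every
`p ∈ ⟨▷⟩` and every labelling `l`. -/
theorem Fmap_generated_pairPositioner :
    Fmap (generatedCategory {PartitionDiagram.pairPositioner}) = {(1 : FreeZ2)} := by
  apply Set.eq_singleton_iff_unique_mem.mpr
  constructor
  · refine ⟨PartitionDiagram.pairPartition, ?_, fun _ => 0,
      fun x y => ⟨fun _ => rfl, fun _ => rfl⟩, ?_⟩
    · exact Set.mem_sInter.mpr fun Mset hM => hM.1.pair_mem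
    · have e : wordOf PartitionDiagram.pairPartition (fun _ => 0) =
        gen 0 * (gen 0 * 1) := rfl
      rw [e, TrivAux.gen_cancel]
  · rintro g ⟨p, hpmem, lab2, hlab, hword⟩
    have hsub : ({PartitionDiagram.pairPositioner} : Set PartitionDiagram) ⊆ TrivAux.Mtriv :=
      Set.singleton_subset_iff.mpr TrivAux.pp_mem'
    have hpM : p ∈ TrivAux.Mtriv := Set.mem_sInter.mp hpmem TrivAux.Mtriv ⟨TrivAux.Mcat, hsub⟩
    rw [← hword]
    exact hpM lab2 fun x y hxy => (hlab x y).mpr hxy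
end

section
/- For the category of partitions C = ⟨⨯, ↑⊗↑, ⊓⊓⟩ generated by the crossing partition, the double singleton and the four block partition, F(C) is the kernel of the group homomorphism Z_2^{*∞} → Z_2 sending every generator a_i to the nontrivial element of Z_2; equivalently, F(C) consists exactly of the elements of Z_2^{*∞} whose reduced word has even length, and Z_2^{*∞}/F(C) ≅ Z_2. -/
open Classical

open PartitionDiagram

section Z2Aux
open PartitionDiagram

lemma isPartitionCategory_generated (S : Set PartitionDiagram) :
    IsPartitionCategory (generatedCategory S) := by
  have hm : ∀ p, p ∈ generatedCategory S ↔
      ∀ M, (IsPartitionCategory M ∧ S ⊆ M) → p ∈ M := by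
    intro p; simp [generatedCategory, Set.mem_sInter]
  constructor
  · exact (hm _).2 fun M hM => hM.1.id_mem
  · exact (hm _).2 fun M hM => hM.1.pair_mem
  · exact fun p hp q hq => (hm _).2 fun M hM =>
      hM.1.tensor_mem p ((hm _).1 hp M hM) q ((hm _).1 hq M hM)
  · exact fun p hp q hq h => (hm _).2 fun M hM =>
      hM.1.comp_mem p ((hm _).1 hp M hM) q ((hm _).1 hq M hM) h
  · exact fun p hp => (hm _).2 fun M hM => hM.1.invol_mem p ((hm _).1 hp M hM)
  · exact fun p hp h => (hm _).2 fun M hM => hM.1.rotLU_mem p ((hm _).1 hp M hM) h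
  · exact fun p hp h => (hm _).2 fun M hM => hM.1.rotLD_mem p ((hm _).1 hp M hM) h
  · exact fun p hp h => (hm _).2 fun M hM => hM.1.rotRU_mem p ((hm _).1 hp M hM) h
  · exact fun p hp h => (hm _).2 fun M hM => hM.1.rotRD_mem p ((hm _).1 hp M hM) h

lemma subset_generated (S : Set PartitionDiagram) : S ⊆ generatedCategory S :=
  fun _ hp => Set.mem_sInter.mpr fun _ hM => hM.2 hp

/-- encoding of a point as (side, index). -/
def enc {u l : ℕ} : Fin u ⊕ Fin l → Bool × ℕ :=
  Sum.elim (fun i => (true, (i : ℕ))) fun j => (false, (j : ℕ))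

/-- `q` has `a` upper points, `b` lower points, and its blocks are the fibers of `F`. -/
def Shape (q : PartitionDiagram) (a b : ℕ) (F : Bool × ℕ → ℕ) : Prop :=
  q.upper = a ∧ q.lower = b ∧
    ∀ x y : Fin q.upper ⊕ Fin q.lower, q.rel.r x y ↔ F (enc x) = F (enc y)

lemma enc_lt {u l : ℕ} (x : Fin u ⊕ Fin l) :
    (enc x).2 < (if (enc x).1 then u else l) := by
  rcases x with i | i <;> simp [enc, i.isLt]

lemma Shape.transfer {q : PartitionDiagram} {a b : ℕ} {F F' : Bool × ℕ → ℕ}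
    (h : Shape q a b F)
    (hk : ∀ s v s' v', v < (if s then a else b) → v' < (if s' then a else b) →
      (F (s, v) = F (s', v') ↔ F' (s, v) = F' (s', v'))) : Shape q a b F' := by
  obtain ⟨hu, hl, hiff⟩ := h
  subst hu; subst hl
  refine ⟨rfl, rfl, fun x y => ?_⟩
  exact (hiff x y).trans (hk (enc x).1 (enc x).2 (enc y).1 (enc y).2 (enc_lt x) (enc_lt y))

lemma shape_idPartition : Shape idPartition 1 1 (fun _ => 0) :=
  ⟨rfl, rfl, fun _ _ => ⟨fun _ => rfl, fun _ => rfl⟩⟩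

lemma shape_pairPartition : Shape pairPartition 0 2 (fun _ => 0) :=
  ⟨rfl, rfl, fun _ _ => ⟨fun _ => rfl, fun _ => rfl⟩⟩

lemma shape_fourBlock : Shape fourBlock 0 4 (fun _ => 0) :=
  ⟨rfl, rfl, fun _ _ => ⟨fun _ => rfl, fun _ => rfl⟩⟩

lemma shape_doubleSingleton : Shape doubleSingleton 0 2 (fun p => p.2) := by
  refine ⟨rfl, rfl, fun x y => ?_⟩
  rcases x with i | i
  · exact i.elim0
  rcases y with j | j
  · exact j.elim0
  exact Iff.rfl

lemma shape_crossing :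
    Shape crossing 2 2 (fun p => if p.1 then p.2 else 1 - p.2) := by
  refine ⟨rfl, rfl, fun x y => ?_⟩
  rcases x with i | i <;> rcases y with j | j <;>
    exact Iff.rfl

/-- the (2,2) one-block partition, obtained by rotating the four block. -/
def bigBlock : PartitionDiagram :=
  rotLD (rotLD fourBlock (by norm_num [fourBlock, ofLabels]))
    (by norm_num [rotLD, fourBlock, ofLabels])

lemma shape_bigBlock : Shape bigBlock 2 2 (fun _ => 0) :=
  ⟨rfl, rfl, fun _ _ => ⟨fun _ => rfl, fun _ => rfl⟩⟩

/-- combined pattern function for a tensor product. -/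
def combF (a b : ℕ) (F G : Bool × ℕ → ℕ) : Bool × ℕ → ℕ :=
  fun p => if p.2 < (if p.1 then a else b) then 2 * F p
    else 2 * G (p.1, p.2 - (if p.1 then a else b)) + 1

lemma combF_lt {a b : ℕ} {F G : Bool × ℕ → ℕ} {s : Bool} {v : ℕ}
    (h : v < (if s then a else b)) : combF a b F G (s, v) = 2 * F (s, v) := by
  simp [combF, h]

lemma combF_ge {a b : ℕ} {F G : Bool × ℕ → ℕ} {s : Bool} {v : ℕ} :
    combF a b F G (s, v + (if s then a else b)) = 2 * G (s, v) + 1 := by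
  simp [combF]

lemma splitPoint_cases {a b c d : ℕ} (x : Fin (a + b) ⊕ Fin (c + d)) :
    (∃ z : Fin a ⊕ Fin c, splitPoint x = Sum.inl z ∧ (enc x).1 = (enc z).1 ∧
      (enc x).2 = (enc z).2 ∧ (enc z).2 < (if (enc z).1 then a else c)) ∨
    (∃ z : Fin b ⊕ Fin d, splitPoint x = Sum.inr z ∧ (enc x).1 = (enc z).1 ∧
      (enc x).2 = (enc z).2 + (if (enc z).1 then a else c)) := by
  rcases x with u | u <;> rcases h : finSumFinEquiv.symm u with i | i <;>
    have hu := (Equiv.symm_apply_eq _).mp h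
  · exact Or.inl ⟨Sum.inl i, by simp [splitPoint, h], by simp [enc], by simp [enc, hu], by
      simp [enc, i.isLt]⟩
  · exact Or.inr ⟨Sum.inl i, by simp [splitPoint, h], by simp [enc], by
      simp [enc, hu, Nat.add_comm]⟩
  · exact Or.inl ⟨Sum.inr i, by simp [splitPoint, h], by simp [enc], by simp [enc, hu], by
      simp [enc, i.isLt]⟩
  · exact Or.inr ⟨Sum.inr i, by simp [splitPoint, h], by simp [enc], by
      simp [enc, hu, Nat.add_comm]⟩

lemma Shape.tensorShape {p q : PartitionDiagram} {a b c d : ℕ} {F G : Bool × ℕ → ℕ}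
    (hp : Shape p a b F) (hq : Shape q c d G) :
    Shape (PartitionDiagram.tensor p q) (a + c) (b + d) (combF a b F G) := by
  obtain ⟨hpu, hpl, hpr⟩ := hp; obtain ⟨hqu, hql, hqr⟩ := hq
  subst hpu; subst hpl; subst hqu; subst hql
  refine ⟨rfl, rfl, fun x y => ?_⟩
  show Sum.map (Quotient.mk p.rel) (Quotient.mk q.rel) (splitPoint x) =
    Sum.map (Quotient.mk p.rel) (Quotient.mk q.rel) (splitPoint y) ↔ _
  rcases splitPoint_cases x with ⟨z, hz, h1, h2, h3⟩ | ⟨z, hz, h1, h2⟩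
  · rcases splitPoint_cases y with ⟨w, hw, g1, g2, g3⟩ | ⟨w, hw, g1, g2⟩
    · rw [hz, hw, show enc x = ((enc z).1, (enc z).2) from Prod.ext h1 h2,
        show enc y = ((enc w).1, (enc w).2) from Prod.ext g1 g2, combF_lt h3, combF_lt g3]
      simp only [Sum.map_inl, Sum.inl.injEq, Quotient.eq]
      rw [hpr z w]
      simp only [Prod.mk.eta]
      omega
    · rw [hz, hw, show enc x = ((enc z).1, (enc z).2) from Prod.ext h1 h2,
        show enc y = ((enc w).1, (enc w).2 + if (enc w).1 then p.upper else p.lower) from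
          Prod.ext g1 g2, combF_lt h3, combF_ge]
      simp only [Sum.map_inl, Sum.map_inr]
      exact ⟨fun hh => absurd hh (by simp), by omega⟩
  · rcases splitPoint_cases y with ⟨w, hw, g1, g2, g3⟩ | ⟨w, hw, g1, g2⟩
    · rw [hz, hw, show enc x = ((enc z).1, (enc z).2 + if (enc z).1 then p.upper else p.lower)
          from Prod.ext h1 h2,
        show enc y = ((enc w).1, (enc w).2) from Prod.ext g1 g2, combF_ge, combF_lt g3]
      simp only [Sum.map_inl, Sum.map_inr]
      exact ⟨fun hh => absurd hh (by simp), by omega⟩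
    · rw [hz, hw, show enc x = ((enc z).1, (enc z).2 + if (enc z).1 then p.upper else p.lower)
          from Prod.ext h1 h2,
        show enc y = ((enc w).1, (enc w).2 + if (enc w).1 then p.upper else p.lower) from
          Prod.ext g1 g2, combF_ge, combF_ge]
      simp only [Sum.map_inr, Sum.inr.injEq, Quotient.eq]
      rw [hqr z w]
      simp only [Prod.mk.eta]
      omega

section Master

variable (p q : PartitionDiagram) (h : p.lower = q.upper)

/-- Master lemma computing a composition. -/
lemma comp_rel_iff (s : Setoid (Fin p.upper ⊕ Fin p.lower))
    (φ : Fin q.lower → Fin p.lower)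
    (hφ : ∀ j, q.rel.r (Sum.inr j) (Sum.inl (Fin.cast h (φ j))))
    (H1 : ∀ a b, p.rel.r a b → s.r a b)
    (H2 : ∀ i i' : Fin q.upper, q.rel.r (Sum.inl i) (Sum.inl i') →
      s.r (Sum.inr (Fin.cast h.symm i)) (Sum.inr (Fin.cast h.symm i')))
    (H3 : ∀ a b, s.r a b → Relation.EqvGen (compRel p q h)
      (Sum.map id Sum.inl a) (Sum.map id Sum.inl b)) :
    ∀ x y : Fin p.upper ⊕ Fin q.lower,
      (comp p q h).rel.r x y ↔ s.r (Sum.map id φ x) (Sum.map id φ y) := by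
  classical
  set ρ : Fin p.upper ⊕ (Fin p.lower ⊕ Fin q.lower) → Fin p.upper ⊕ Fin p.lower :=
    fun x => match x with
    | Sum.inl i => Sum.inl i
    | Sum.inr (Sum.inl i) => Sum.inr i
    | Sum.inr (Sum.inr j) => Sum.inr (φ j) with hρ
  have key : ∀ u v, Relation.EqvGen (compRel p q h) u v → s.r (ρ u) (ρ v) := by
    intro u v huv
    induction huv with
    | rel x y hr =>
      rcases hr with ⟨a, b, hab, rfl, rfl⟩ | ⟨a, b, hab, rfl, rfl⟩
      · have ea : ∀ c : Fin p.upper ⊕ Fin p.lower, ρ (iotaP p q c) = c := by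
          rintro (i | i) <;> rfl
        rw [ea, ea]; exact H1 a b hab
      · rcases a with i | j <;> rcases b with i' | j'
        · exact H2 i i' hab
        · exact H2 i _ (q.rel.iseqv.trans hab (hφ j'))
        · exact s.iseqv.symm (H2 i' _ (q.rel.iseqv.trans (q.rel.iseqv.symm hab) (hφ j)))
        · exact H2 _ _ (q.rel.iseqv.trans (q.rel.iseqv.symm (hφ j))
            (q.rel.iseqv.trans hab (hφ j')))
    | refl x => exact s.iseqv.refl _
    | symm x y _ ih => exact s.iseqv.symm ih
    | trans x y z _ _ ih1 ih2 => exact s.iseqv.trans ih1 ih2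
  have step : ∀ x : Fin p.upper ⊕ Fin q.lower,
      Relation.EqvGen (compRel p q h) (Sum.map id Sum.inr x)
        (Sum.map id Sum.inl (Sum.map id φ x)) := by
    rintro (i | j)
    · exact Relation.EqvGen.refl _
    · exact Relation.EqvGen.rel _ _
        (Or.inr ⟨Sum.inr j, Sum.inl (Fin.cast h (φ j)), hφ j, rfl, rfl⟩)
  intro x y
  constructor
  · intro hxy
    have hE : Relation.EqvGen (compRel p q h) (Sum.map id Sum.inr x) (Sum.map id Sum.inr y) :=
      hxy
    have := key _ _ hE
    have ex : ∀ z : Fin p.upper ⊕ Fin q.lower, ρ (Sum.map id Sum.inr z) = Sum.map id φ z := by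
      rintro (i | j) <;> rfl
    rwa [ex, ex] at this
  · intro hs
    show Relation.EqvGen (compRel p q h) _ _
    exact Relation.EqvGen.trans _ _ _ (step x)
      (Relation.EqvGen.trans _ _ _ (H3 _ _ hs)
        (Relation.EqvGen.symm _ _ (step y)))

end Master

/-- The category generated by the crossing, double singleton, and four block. -/
def Cat : Set PartitionDiagram :=
  generatedCategory {PartitionDiagram.crossing, PartitionDiagram.doubleSingleton,
    PartitionDiagram.fourBlock}

lemma catC : IsPartitionCategory Cat := isPartitionCategory_generated _

lemma crossing_memC : crossing ∈ Cat := subset_generated _ (by simp)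
lemma doubleSingleton_memC : doubleSingleton ∈ Cat := subset_generated _ (by simp)
lemma fourBlock_memC : fourBlock ∈ Cat := subset_generated _ (by simp)
lemma bigBlock_memC : bigBlock ∈ Cat :=
  catC.rotLD_mem _ (catC.rotLD_mem _ fourBlock_memC _) _

/-- The empty partition. -/
def emptyD : PartitionDiagram := comp pairPartition (invol pairPartition) rfl

lemma emptyD_memC : emptyD ∈ Cat :=
  catC.comp_mem _ catC.pair_mem _ (catC.invol_mem _ catC.pair_mem) rfl

lemma shape_emptyD (F : Bool × ℕ → ℕ) : Shape emptyD 0 0 F := by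
  refine ⟨rfl, rfl, fun x y => ?_⟩
  rcases x with i | i <;> exact i.elim0

/-- tensor powers of the identity partition. -/
def idPow : ℕ → PartitionDiagram
  | 0 => emptyD
  | n + 1 => PartitionDiagram.tensor (idPow n) idPartition

lemma idPow_memC (n : ℕ) : idPow n ∈ Cat := by
  induction n with
  | zero => exact emptyD_memC
  | succ n ih => exact catC.tensor_mem _ ih _ catC.id_mem

lemma shape_idPow (n : ℕ) : Shape (idPow n) n n (fun pr => pr.2) := by
  induction n with
  | zero => exact shape_emptyD _
  | succ n ih =>
    have := ih.tensorShape shape_idPartition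
    refine this.transfer ?_
    intro s v s' v' hv hv'
    simp only [combF, ite_self] at hv hv' ⊢
    split_ifs <;> first | omega | (rw [Nat.lt_succ_iff] at hv hv'; omega)

/-- the swap of `k` and `k+1` as a function on `ℕ`. -/
def swapN (k : ℕ) : ℕ → ℕ := fun v => if v = k then k + 1 else if v = k + 1 then k else v

/-- the diagram swapping strands `k` and `k+1` out of `k+2+m` strands. -/
def swapD (k m : ℕ) : PartitionDiagram :=
  PartitionDiagram.tensor (PartitionDiagram.tensor (idPow k) crossing) (idPow m)

lemma swapD_memC (k m : ℕ) : swapD k m ∈ Cat :=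
  catC.tensor_mem _ (catC.tensor_mem _ (idPow_memC k) _ crossing_memC) _ (idPow_memC m)

lemma shape_swapD (k m : ℕ) : Shape (swapD k m) (k + 2 + m) (k + 2 + m)
    (fun pr => if pr.1 then pr.2 else swapN k pr.2) := by
  have h1 := (shape_idPow k).tensorShape shape_crossing
  have h2 := h1.tensorShape (shape_idPow m)
  refine h2.transfer ?_
  intro s v s' v' hv hv'
  rw [ite_self] at hv hv'
  cases s <;> cases s' <;> simp [combF, swapN] <;> split_ifs <;> omega

/-- the diagram merging the blocks of strands `k` and `k+1` out of `k+2+m` strands. -/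
def mergeD (k m : ℕ) : PartitionDiagram :=
  PartitionDiagram.tensor (PartitionDiagram.tensor (idPow k) bigBlock) (idPow m)

lemma mergeD_memC (k m : ℕ) : mergeD k m ∈ Cat :=
  catC.tensor_mem _ (catC.tensor_mem _ (idPow_memC k) _ bigBlock_memC) _ (idPow_memC m)

lemma shape_mergeD (k m : ℕ) : Shape (mergeD k m) (k + 2 + m) (k + 2 + m)
    (fun pr => if pr.2 = k + 1 then k else pr.2) := by
  have h1 := (shape_idPow k).tensorShape shape_bigBlock
  have h2 := h1.tensorShape (shape_idPow m)
  refine h2.transfer ?_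
  intro s v s' v' hv hv'
  rw [ite_self] at hv hv'
  cases s <;> cases s' <;> simp [combF] <;> split_ifs <;> omega

/-- A pattern function `f` (restricted to indices `< n`) is realized by a partition in `Cat`
with no upper points. -/
def Good (n : ℕ) (f : ℕ → ℕ) : Prop :=
  ∃ p ∈ Cat, Shape p 0 n (fun pr => f pr.2)

lemma good_zero (f : ℕ → ℕ) : Good 0 f := ⟨emptyD, emptyD_memC, shape_emptyD _⟩

lemma good_congr {n : ℕ} {f g : ℕ → ℕ} (h : Good n f)
    (hk : ∀ v w, v < n → w < n → (f v = f w ↔ g v = g w)) : Good n g := by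
  obtain ⟨p, hp, hsh⟩ := h
  refine ⟨p, hp, hsh.transfer ?_⟩
  intro s v s' v' hv hv'
  cases s
  · cases s'
    · exact hk v v' (by simpa using hv) (by simpa using hv')
    · exact absurd hv' (by simp)
  · exact absurd hv (by simp)

/-- the relation merging the blocks of the lower points `S` and `T` of `p`. -/
def mrel (p : PartitionDiagram) (S T : Fin p.lower) :
    (Fin p.upper ⊕ Fin p.lower) → (Fin p.upper ⊕ Fin p.lower) → Prop :=
  fun x y => p.rel.r x y ∨
    ((p.rel.r x (Sum.inr S) ∨ p.rel.r x (Sum.inr T)) ∧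
     (p.rel.r y (Sum.inr S) ∨ p.rel.r y (Sum.inr T)))

lemma mrel_equiv (p : PartitionDiagram) (S T : Fin p.lower) : Equivalence (mrel p S T) := by
  constructor
  · intro x; exact Or.inl (p.rel.iseqv.refl x)
  · intro x y hxy
    rcases hxy with h' | ⟨h1, h2⟩
    · exact Or.inl (p.rel.iseqv.symm h')
    · exact Or.inr ⟨h2, h1⟩
  · intro x y z hxy hyz
    rcases hxy with h' | ⟨h1, h2⟩ <;> rcases hyz with h'' | ⟨h3, h4⟩
    · exact Or.inl (p.rel.iseqv.trans h' h'')
    · exact Or.inr ⟨h3.imp (p.rel.iseqv.trans h') (p.rel.iseqv.trans h'), h4⟩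
    · exact Or.inr ⟨h1, h2.imp (p.rel.iseqv.trans (p.rel.iseqv.symm h''))
        (p.rel.iseqv.trans (p.rel.iseqv.symm h''))⟩
    · exact Or.inr ⟨h1, h4⟩

lemma good_comp_perm {n : ℕ} {f : ℕ → ℕ} (hg : Good n f) {q : PartitionDiagram}
    (hq : q ∈ Cat) {σ : ℕ → ℕ} (hσ : ∀ v, v < n → σ v < n)
    (hsh : Shape q n n (fun pr => if pr.1 then pr.2 else σ pr.2)) :
    Good n (fun v => f (σ v)) := by
  obtain ⟨p, hp, hpu, hpl, hpr⟩ := hg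
  obtain ⟨hqu, hql, hqr⟩ := hsh
  have h : p.lower = q.upper := hpl.trans hqu.symm
  let φ : Fin q.lower → Fin p.lower := fun j => ⟨σ j.1, by
    rw [hpl]; exact hσ _ (by rw [← hql]; exact j.isLt)⟩
  have hφval : ∀ j, ((φ j : Fin p.lower) : ℕ) = σ (j : ℕ) := fun _ => rfl
  have hφ : ∀ j, q.rel.r (Sum.inr j) (Sum.inl (Fin.cast h (φ j))) := by
    intro j
    rw [hqr]
    simp [enc, hφval]
  have H2 : ∀ i i' : Fin q.upper, q.rel.r (Sum.inl i) (Sum.inl i') →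
      p.rel.r (Sum.inr (Fin.cast h.symm i)) (Sum.inr (Fin.cast h.symm i')) := by
    intro i i' hii
    rw [hqr] at hii
    simp only [enc, Sum.elim_inl, if_true] at hii
    have he : (Fin.cast h.symm i) = (Fin.cast h.symm i') := by
      apply Fin.ext; simpa using hii
    rw [he]
  have key := comp_rel_iff p q h p.rel φ hφ (fun _ _ hh => hh) H2
    (fun a b hab => Relation.EqvGen.rel _ _ (Or.inl ⟨a, b, hab, rfl, rfl⟩))
  refine ⟨comp p q h, catC.comp_mem _ hp _ hq h, hpu, hql, fun x y => ?_⟩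
  rw [key x y]
  rcases x with i | j
  · have hi : (i : ℕ) < p.upper := i.isLt
    exact absurd hi (by omega)
  rcases y with i | j'
  · have hi : (i : ℕ) < p.upper := i.isLt
    exact absurd hi (by omega)
  simp only [Sum.map_inr]
  rw [hpr]
  exact Iff.rfl

lemma good_comp_merge {n : ℕ} {f : ℕ → ℕ} (hg : Good n f) {q : PartitionDiagram}
    (hq : q ∈ Cat) {s₀ t : ℕ} (hs : s₀ < n) (ht : t < n) (hst : s₀ ≠ t)
    (hsh : Shape q n n (fun pr => if pr.2 = t then s₀ else pr.2)) :
    Good n (fun v => if f v = f t then f s₀ else f v) := by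
  obtain ⟨p, hp, hpu, hpl, hpr⟩ := hg
  obtain ⟨hqu, hql, hqr⟩ := hsh
  have h : p.lower = q.upper := hpl.trans hqu.symm
  have hpq : q.lower = p.lower := hql.trans hpl.symm
  have hS : s₀ < p.lower := by omega
  have hT : t < p.lower := by omega
  have hrelval : ∀ (u v : Fin p.lower),
      (p.rel.r (Sum.inr u) (Sum.inr v) ↔ f (u : ℕ) = f (v : ℕ)) := by
    intro u v; rw [hpr]; simp [enc]
  have H2 : ∀ i i' : Fin q.upper, q.rel.r (Sum.inl i) (Sum.inl i') →
      mrel p ⟨s₀, hS⟩ ⟨t, hT⟩ (Sum.inr (Fin.cast h.symm i)) (Sum.inr (Fin.cast h.symm i')) := by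
    intro i i' hii
    rw [hqr] at hii
    simp only [enc, Sum.elim_inl] at hii
    unfold mrel
    by_cases e1 : (i : ℕ) = t <;> by_cases e2 : (i' : ℕ) = t
    · refine Or.inr ⟨Or.inr ?_, Or.inr ?_⟩ <;>
        · rw [hrelval]; simp [e1, e2]
    · simp only [e1, e2, if_true, if_false] at hii
      refine Or.inr ⟨Or.inr ?_, Or.inl ?_⟩
      · rw [hrelval]; simp [e1]
      · rw [hrelval]; simp [← hii]
    · simp only [e1, e2, if_true, if_false] at hii
      refine Or.inr ⟨Or.inl ?_, Or.inr ?_⟩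
      · rw [hrelval]; simp [hii]
      · rw [hrelval]; simp [e2]
    · simp only [e1, e2, if_true, if_false] at hii
      refine Or.inl ?_
      rw [hrelval]; simp [hii]
  have hφ : ∀ j, q.rel.r (Sum.inr j) (Sum.inl (Fin.cast h (Fin.cast hpq j))) := by
    intro j
    rw [hqr]
    simp [enc]
    rfl
  have stepP : ∀ u v, p.rel.r u v → Relation.EqvGen (compRel p q h)
      (Sum.map id Sum.inl u) (Sum.map id Sum.inl v) :=
    fun u v huv => Relation.EqvGen.rel _ _ (Or.inl ⟨u, v, huv, rfl, rfl⟩)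
  have hqST : q.rel.r (Sum.inl (Fin.cast h ⟨s₀, hS⟩)) (Sum.inl (Fin.cast h ⟨t, hT⟩)) := by
    rw [hqr]
    simp [enc, hst]
  have stepST : Relation.EqvGen (compRel p q h)
      (Sum.map id Sum.inl (Sum.inr (⟨s₀, hS⟩ : Fin p.lower)))
      (Sum.map id Sum.inl (Sum.inr (⟨t, hT⟩ : Fin p.lower))) :=
    Relation.EqvGen.rel _ _ (Or.inr ⟨Sum.inl (Fin.cast h ⟨s₀, hS⟩),
      Sum.inl (Fin.cast h ⟨t, hT⟩), hqST, rfl, rfl⟩)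
  have H3 : ∀ a b, mrel p ⟨s₀, hS⟩ ⟨t, hT⟩ a b → Relation.EqvGen (compRel p q h)
      (Sum.map id Sum.inl a) (Sum.map id Sum.inl b) := by
    have toS : ∀ u, (p.rel.r u (Sum.inr ⟨s₀, hS⟩) ∨ p.rel.r u (Sum.inr ⟨t, hT⟩)) →
        Relation.EqvGen (compRel p q h) (Sum.map id Sum.inl u)
          (Sum.map id Sum.inl (Sum.inr (⟨s₀, hS⟩ : Fin p.lower))) := by
      intro u hu
      rcases hu with h' | h'
      · exact stepP _ _ h'
      · exact Relation.EqvGen.trans _ _ _ (stepP _ _ h') (Relation.EqvGen.symm _ _ stepST)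
    intro a b hab
    rcases hab with hab | ⟨ha, hb⟩
    · exact stepP _ _ hab
    · exact Relation.EqvGen.trans _ _ _ (toS a ha) (Relation.EqvGen.symm _ _ (toS b hb))
  have key := comp_rel_iff p q h ⟨mrel p ⟨s₀, hS⟩ ⟨t, hT⟩, mrel_equiv p _ _⟩ (Fin.cast hpq) hφ
    (fun _ _ hh => Or.inl hh) H2 H3
  refine ⟨comp p q h, catC.comp_mem _ hp _ hq h, hpu, hql, fun x y => ?_⟩
  rw [key x y]
  rcases x with i | j
  · have hi : (i : ℕ) < p.upper := i.isLt
    exact absurd hi (by omega)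
  rcases y with i | j'
  · have hi : (i : ℕ) < p.upper := i.isLt
    exact absurd hi (by omega)
  simp only [Sum.map_inr]
  show mrel p ⟨s₀, hS⟩ ⟨t, hT⟩ (Sum.inr (Fin.cast hpq j)) (Sum.inr (Fin.cast hpq j')) ↔ _
  unfold mrel
  simp only [hrelval, Fin.coe_cast, enc, Sum.elim_inr]
  change (f (j : ℕ) = f (j' : ℕ) ∨ ((f (j : ℕ) = f s₀ ∨ f (j : ℕ) = f t) ∧
      (f (j' : ℕ) = f s₀ ∨ f (j' : ℕ) = f t))) ↔
    (if f (j : ℕ) = f t then f s₀ else f j) = (if f (j' : ℕ) = f t then f s₀ else f j')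
  split_ifs <;> omega

lemma good_of_eq {n : ℕ} {f g : ℕ → ℕ} (hg : Good n f) (he : ∀ v, v < n → f v = g v) :
    Good n g :=
  good_congr hg (by intro v w hv hw; rw [he v hv, he w hw])

lemma good_swap {n : ℕ} {f : ℕ → ℕ} {k : ℕ} (hg : Good n f) (hk : k + 1 < n) :
    Good n (fun v => f (swapN k v)) := by
  obtain ⟨m, rfl⟩ : ∃ m, n = k + 2 + m := ⟨n - (k + 2), by omega⟩
  exact good_comp_perm hg (swapD_memC k m)
    (fun v hv => by unfold swapN; split_ifs <;> omega) (shape_swapD k m)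

lemma good_merge_adj {n : ℕ} {f : ℕ → ℕ} {k : ℕ} (hg : Good n f) (hk : k + 1 < n) :
    Good n (fun v => if f v = f (k + 1) then f k else f v) := by
  obtain ⟨m, rfl⟩ : ∃ m, n = k + 2 + m := ⟨n - (k + 2), by omega⟩
  exact good_comp_merge hg (mergeD_memC k m) (by omega) (by omega) (by omega)
    (shape_mergeD k m)

lemma good_merge_of_lt {n : ℕ} : ∀ (d : ℕ) (f : ℕ → ℕ) (i j : ℕ), i + d + 1 = j → j < n →
    Good n f → Good n (fun v => if f v = f j then f i else f v) := by
  intro d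
  induction d with
  | zero =>
    intro f i j hij hj hg
    obtain rfl : j = i + 0 + 1 := hij.symm
    exact good_merge_adj hg (by omega)
  | succ d ih =>
    intro f i j hij hj hg
    have hsw : Good n (fun v => f (swapN (j - 1) v)) := good_swap hg (by omega)
    have hm := ih (fun v => f (swapN (j - 1) v)) i (j - 1) (by omega) (by omega) hsw
    have e1 : swapN (j - 1) (j - 1) = j := by unfold swapN; split_ifs <;> omega
    have e2 : swapN (j - 1) i = i := by unfold swapN; split_ifs <;> omega
    have hs2 := good_swap hm (show (j - 1) + 1 < n by omega)
    refine good_of_eq hs2 ?_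
    intro v hv
    have e3 : swapN (j - 1) (swapN (j - 1) v) = v := by unfold swapN; split_ifs <;> omega
    simp only [e3, e1, e2]

lemma good_merge_any {n : ℕ} {f : ℕ → ℕ} (hg : Good n f) (i j : ℕ)
    (hi : i < n) (hj : j < n) (hij : i ≠ j) :
    Good n (fun v => if f v = f j then f i else f v) := by
  rcases Nat.lt_or_ge i j with hlt | hge
  · exact good_merge_of_lt (j - i - 1) f i j (by omega) hj hg
  · have h1 := good_merge_of_lt (i - j - 1) f j i (by omega) hi hg
    refine good_congr h1 ?_
    intro v w hv hw
    split_ifs <;> omega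

lemma good_prepend {n : ℕ} {f : ℕ → ℕ} (hg : Good n f) {a b : ℕ} (hab : a ≠ b)
    (hfa : ∀ v, v < n → f v ≠ a) (hfb : ∀ v, v < n → f v ≠ b) :
    Good (2 + n) (fun v => if v = 0 then a else if v = 1 then b else f (v - 2)) := by
  obtain ⟨p, hp, hsh⟩ := hg
  have hsh2 := shape_doubleSingleton.tensorShape hsh
  refine ⟨PartitionDiagram.tensor doubleSingleton p,
    catC.tensor_mem _ doubleSingleton_memC _ hp, hsh2.transfer ?_⟩
  intro s v s' v' hv hv'
  cases s
  · cases s'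
    · have hv2 : v < 2 + n := by simpa using hv
      have hv2' : v' < 2 + n := by simpa using hv'
      simp only [combF, Bool.false_eq_true, if_false]
      by_cases c1 : v < 2 <;> by_cases c2 : v' < 2
      · rw [if_pos c1, if_pos c2]
        rcases (show v = 0 ∨ v = 1 by omega) with rfl | rfl <;>
          rcases (show v' = 0 ∨ v' = 1 by omega) with rfl | rfl
        · simp
        · rw [if_pos rfl, if_neg one_ne_zero, if_pos rfl]
          exact iff_of_false (by omega) hab
        · rw [if_pos rfl, if_neg one_ne_zero, if_pos rfl]
          exact iff_of_false (by omega) (Ne.symm hab)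
        · simp
      · rw [if_pos c1, if_neg c2]
        have na := hfa (v' - 2) (by omega)
        have nb := hfb (v' - 2) (by omega)
        rw [if_neg (show ¬ v' = 0 by omega), if_neg (show ¬ v' = 1 by omega)]
        rcases (show v = 0 ∨ v = 1 by omega) with rfl | rfl
        · rw [if_pos rfl]
          exact iff_of_false (by omega) fun hc => na hc.symm
        · rw [if_neg one_ne_zero, if_pos rfl]
          exact iff_of_false (by omega) fun hc => nb hc.symm
      · rw [if_neg c1, if_pos c2]
        have na := hfa (v - 2) (by omega)
        have nb := hfb (v - 2) (by omega)
        rw [if_neg (show ¬ v = 0 by omega), if_neg (show ¬ v = 1 by omega)]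
        rcases (show v' = 0 ∨ v' = 1 by omega) with rfl | rfl
        · rw [if_pos rfl]
          exact iff_of_false (by omega) fun hc => na hc
        · rw [if_neg one_ne_zero, if_pos rfl]
          exact iff_of_false (by omega) fun hc => nb hc
      · rw [if_neg c1, if_neg c2, if_neg (show ¬ v = 0 by omega),
          if_neg (show ¬ v = 1 by omega), if_neg (show ¬ v' = 0 by omega),
          if_neg (show ¬ v' = 1 by omega)]
        omega
    · exact absurd hv' (by simp)
  · exact absurd hv (by simp)

lemma ker_ptwise {n : ℕ} {f h : ℕ → ℕ} (he : ∀ v, v < n → h v = f v) :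
    ∀ v w, v < n → w < n → (h v = h w ↔ f v = f w) := fun v w hv hw => by
  rw [he v hv, he w hw]

lemma ker_single {n : ℕ} {f h : ℕ → ℕ} {p : ℕ}
    (hpt : ∀ v, v < n → v ≠ p → h v = f v)
    (hfs : ∀ v, v < n → v ≠ p → f v ≠ f p)
    (hhs : ∀ v, v < n → v ≠ p → h v ≠ h p) :
    ∀ v w, v < n → w < n → (h v = h w ↔ f v = f w) := by
  intro v w hv hw
  by_cases e1 : v = p <;> by_cases e2 : w = p
  · subst e1; subst e2; simp
  · subst e1
    exact iff_of_false (fun hc => hhs w hw e2 hc.symm) (fun hc => hfs w hw e2 hc.symm)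
  · subst e2
    exact iff_of_false (hhs v hv e1) (hfs v hv e1)
  · rw [hpt v hv e1, hpt w hw e2]

lemma ker_double {n : ℕ} {f h : ℕ → ℕ} (hf01 : f 0 = f 1) (hh01 : h 0 = h 1)
    (hpt : ∀ v, v < n → 2 ≤ v → h v = f v)
    (hfs : ∀ v, v < n → 2 ≤ v → f v ≠ f 0)
    (hhs : ∀ v, v < n → 2 ≤ v → h v ≠ h 0) :
    ∀ v w, v < n → w < n → (h v = h w ↔ f v = f w) := by
  intro v w hv hw
  by_cases e1 : v < 2 <;> by_cases e2 : w < 2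
  · have hfv : f v = f 0 := by
      rcases (show v = 0 ∨ v = 1 by omega) with rfl | rfl
      · rfl
      · exact hf01.symm
    have hfw : f w = f 0 := by
      rcases (show w = 0 ∨ w = 1 by omega) with rfl | rfl
      · rfl
      · exact hf01.symm
    have hhv : h v = h 0 := by
      rcases (show v = 0 ∨ v = 1 by omega) with rfl | rfl
      · rfl
      · exact hh01.symm
    have hhw : h w = h 0 := by
      rcases (show w = 0 ∨ w = 1 by omega) with rfl | rfl
      · rfl
      · exact hh01.symm
    exact iff_of_true (by rw [hhv, hhw]) (by rw [hfv, hfw])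
  · have hfv : f v = f 0 := by
      rcases (show v = 0 ∨ v = 1 by omega) with rfl | rfl
      · rfl
      · exact hf01.symm
    have hhv : h v = h 0 := by
      rcases (show v = 0 ∨ v = 1 by omega) with rfl | rfl
      · rfl
      · exact hh01.symm
    exact iff_of_false (fun hc => hhs w hw (by omega) (hhv ▸ hc.symm))
      (fun hc => hfs w hw (by omega) (hfv ▸ hc.symm))
  · have hfw : f w = f 0 := by
      rcases (show w = 0 ∨ w = 1 by omega) with rfl | rfl
      · rfl
      · exact hf01.symm
    have hhw : h w = h 0 := by
      rcases (show w = 0 ∨ w = 1 by omega) with rfl | rfl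
      · rfl
      · exact hh01.symm
    exact iff_of_false (fun hc => hhs v hv (by omega) (hhw ▸ hc))
      (fun hc => hfs v hv (by omega) (hfw ▸ hc))
  · rw [hpt v hv (by omega), hpt w hw (by omega)]

lemma good_all : ∀ n : ℕ, Even n → ∀ f : ℕ → ℕ, Good n f := by
  intro n
  induction n using Nat.strong_induction_on with
  | _ n IH =>
  intro hev f
  rcases Nat.lt_or_ge n 2 with hn | hn
  · have hn0 : n = 0 := by rw [Nat.even_iff] at hev; omega
    subst hn0
    exact good_zero f
  · obtain ⟨m, rfl⟩ : ∃ m, n = m + 2 := ⟨n - 2, by omega⟩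
    have hm : Even m := by rw [Nat.even_iff] at hev ⊢; omega
    have hG' : Good m (fun v => f (v + 2)) := IH m (by omega) hm _
    set N := (Finset.range (m + 2)).sup f + 1 with hNdef
    have hfN : ∀ v, v < m + 2 → f v < N := by
      intro v hv
      have := Finset.le_sup (f := f) (Finset.mem_range.mpr hv)
      omega
    have hpre := good_prepend hG' (show N ≠ N + 1 by omega)
      (fun v hv => by have := hfN (v + 2) (by omega); omega)
      (fun v hv => by have := hfN (v + 2) (by omega); omega)
    rw [show 2 + m = m + 2 by omega] at hpre
    set g : ℕ → ℕ :=
      fun v => if v = 0 then N else if v = 1 then N + 1 else f (v - 2 + 2) with hgdef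
    have hgood : Good (m + 2) g := hpre
    have hgA : g 0 = N := by simp [hgdef]
    have hgB : g 1 = N + 1 := by simp [hgdef]
    have hgC : ∀ v, 2 ≤ v → g v = f v := by
      intro v hv
      show (if v = 0 then N else if v = 1 then N + 1 else f (v - 2 + 2)) = f v
      rw [if_neg (by omega), if_neg (by omega), show v - 2 + 2 = v from by omega]
    by_cases hT0 : ∃ j, 2 ≤ j ∧ j < m + 2 ∧ f j = f 0
    · obtain ⟨j0, hj02, hj0n, hj0f⟩ := hT0
      have s1 : Good (m + 2) (fun v => if g v = g 0 then g j0 else g v) :=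
        good_merge_any hgood j0 0 hj0n (by omega) (by omega)
      set A : ℕ → ℕ := fun v => if g v = g 0 then g j0 else g v with hAdef
      have pA0 : A 0 = f 0 := by
        show (if g 0 = g 0 then g j0 else g 0) = f 0
        rw [if_pos rfl, hgC j0 hj02, hj0f]
      have pAt : ∀ v, 1 ≤ v → v < m + 2 → A v = g v := by
        intro v h1 h2
        show (if g v = g 0 then g j0 else g v) = g v
        rcases (show v = 1 ∨ 2 ≤ v by omega) with rfl | hge
        · rw [if_neg (by rw [hgA, hgB]; omega)]
        · rw [if_neg (by rw [hgA, hgC v hge]; have := hfN v h2; omega)]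
      by_cases hE : f 0 = f 1
      · -- T0 and f 0 = f 1 : additionally merge 1 into 0
        have s2 : Good (m + 2) (fun v => if A v = A 1 then A 0 else A v) :=
          good_merge_any s1 0 1 (by omega) (by omega) (by omega)
        refine good_congr s2 (ker_ptwise ?_)
        intro v hv
        have hA1 : A 1 = N + 1 := by rw [pAt 1 (by omega) (by omega), hgB]
        show (if A v = A 1 then A 0 else A v) = f v
        rcases (show v = 0 ∨ v = 1 ∨ 2 ≤ v by omega) with rfl | rfl | hge
        · rw [if_neg (by rw [pA0, hA1]; have := hfN 0 (by omega); omega), pA0]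
        · rw [if_pos rfl, pA0, hE]
        · rw [if_neg (by rw [pAt v (by omega) hv, hgC v hge, hA1]; have := hfN v hv; omega),
            pAt v (by omega) hv, hgC v hge]
      · by_cases hT1 : ∃ j, 2 ≤ j ∧ j < m + 2 ∧ f j = f 1
        · -- T0, f 0 ≠ f 1, tail match for 1
          obtain ⟨j1, hj12, hj1n, hj1f⟩ := hT1
          have s2 : Good (m + 2) (fun v => if A v = A 1 then A j1 else A v) :=
            good_merge_any s1 j1 1 hj1n (by omega) (by omega)
          refine good_congr s2 (ker_ptwise ?_)
          intro v hv
          have hA1 : A 1 = N + 1 := by rw [pAt 1 (by omega) (by omega), hgB]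
          show (if A v = A 1 then A j1 else A v) = f v
          have hAj1 : A j1 = f j1 := by rw [pAt j1 (by omega) hj1n, hgC j1 hj12]
          rcases (show v = 0 ∨ v = 1 ∨ 2 ≤ v by omega) with rfl | rfl | hge
          · rw [if_neg (by rw [pA0, hA1]; have := hfN 0 (by omega); omega), pA0]
          · rw [if_pos rfl, hAj1, hj1f]
          · rw [if_neg (by rw [pAt v (by omega) hv, hgC v hge, hA1]; have := hfN v hv; omega),
              pAt v (by omega) hv, hgC v hge]
        · -- T0, f 0 ≠ f 1, no tail match for 1 : position 1 stays a fresh singleton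
          push_neg at hT1
          refine good_congr s1 (ker_single (p := 1) ?_ ?_ ?_)
          · intro v hv hv1
            rcases (show v = 0 ∨ 2 ≤ v by omega) with rfl | hge
            · exact pA0
            · rw [pAt v (by omega) hv, hgC v hge]
          · intro v hv hv1
            rcases (show v = 0 ∨ 2 ≤ v by omega) with rfl | hge
            · exact hE
            · exact hT1 v hge hv
          · intro v hv hv1
            have hA1 : A 1 = N + 1 := by rw [pAt 1 (by omega) (by omega), hgB]
            rcases (show v = 0 ∨ 2 ≤ v by omega) with rfl | hge
            · rw [pA0, hA1]; have := hfN 0 (by omega); omega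
            · rw [pAt v (by omega) hv, hgC v hge, hA1]; have := hfN v hv; omega
    · push_neg at hT0
      by_cases hE : f 0 = f 1
      · -- no tail match for 0, f 0 = f 1 : merge 1 into 0, classes {0,1}
        have s2 : Good (m + 2) (fun v => if g v = g 1 then g 0 else g v) :=
          good_merge_any hgood 0 1 (by omega) (by omega) (by omega)
        have pB0 : (if g 0 = g 1 then g 0 else g 0) = N := by rw [ite_self, hgA]
        have pB1 : (if g 1 = g 1 then g 0 else g 1) = N := by rw [if_pos rfl, hgA]
        have pBt : ∀ v, 2 ≤ v → v < m + 2 → (if g v = g 1 then g 0 else g v) = f v := by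
          intro v hge hv
          rw [if_neg (by rw [hgB, hgC v hge]; have := hfN v hv; omega), hgC v hge]
        refine good_congr s2 (ker_double hE ?_ ?_ ?_ ?_)
        · show (if g 0 = g 1 then g 0 else g 0) = (if g 1 = g 1 then g 0 else g 1)
          rw [pB0, pB1]
        · intro v hv hge
          exact pBt v hge hv
        · intro v hv hge
          exact hT0 v hge hv
        · intro v hv hge
          show (if g v = g 1 then g 0 else g v) ≠ (if g 0 = g 1 then g 0 else g 0)
          rw [pBt v hge hv, pB0]
          have := hfN v hv; omega
      · by_cases hT1 : ∃ j, 2 ≤ j ∧ j < m + 2 ∧ f j = f 1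
        · -- no tail match for 0, f 0 ≠ f 1, tail match for 1 : position 0 fresh singleton
          obtain ⟨j1, hj12, hj1n, hj1f⟩ := hT1
          have s2 : Good (m + 2) (fun v => if g v = g 1 then g j1 else g v) :=
            good_merge_any hgood j1 1 hj1n (by omega) (by omega)
          have pB0 : (if g 0 = g 1 then g j1 else g 0) = N := by
            rw [if_neg (by rw [hgA, hgB]; omega), hgA]
          have pB1 : (if g 1 = g 1 then g j1 else g 1) = f 1 := by
            rw [if_pos rfl, hgC j1 hj12, hj1f]
          have pBt : ∀ v, 2 ≤ v → v < m + 2 → (if g v = g 1 then g j1 else g v) = f v := by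
            intro v hge hv
            rw [if_neg (by rw [hgB, hgC v hge]; have := hfN v hv; omega), hgC v hge]
          refine good_congr s2 (ker_single (p := 0) ?_ ?_ ?_)
          · intro v hv hv0
            rcases (show v = 1 ∨ 2 ≤ v by omega) with rfl | hge
            · exact pB1
            · exact pBt v hge hv
          · intro v hv hv0
            rcases (show v = 1 ∨ 2 ≤ v by omega) with rfl | hge
            · exact fun hc => hE hc.symm
            · exact hT0 v hge hv
          · intro v hv hv0
            show (if g v = g 1 then g j1 else g v) ≠ (if g 0 = g 1 then g j1 else g 0)
            rw [pB0]
            rcases (show v = 1 ∨ 2 ≤ v by omega) with rfl | hge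
            · rw [pB1]; have := hfN 1 (by omega); omega
            · rw [pBt v hge hv]; have := hfN v hv; omega
        · -- both positions 0 and 1 are fresh singletons
          push_neg at hT1
          have k1 : ∀ v w, v < m + 2 → w < m + 2 →
              (g v = g w ↔ (fun u => if u = 0 then N else f u) v
                = (fun u => if u = 0 then N else f u) w) := by
            refine ker_single (p := 1) ?_ ?_ ?_
            · intro v hv hv1
              beta_reduce
              rcases (show v = 0 ∨ 2 ≤ v by omega) with rfl | hge
              · rw [hgA, if_pos rfl]
              · rw [hgC v hge, if_neg (by omega)]
            · intro v hv hv1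
              beta_reduce
              rcases (show v = 0 ∨ 2 ≤ v by omega) with rfl | hge
              · rw [if_pos rfl, if_neg one_ne_zero]
                have := hfN 1 (by omega); omega
              · rw [if_neg (by omega : ¬ v = 0), if_neg one_ne_zero]
                exact hT1 v hge hv
            · intro v hv hv1
              rw [hgB]
              rcases (show v = 0 ∨ 2 ≤ v by omega) with rfl | hge
              · rw [hgA]; omega
              · rw [hgC v hge]; have := hfN v hv; omega
          have k2 : ∀ v w, v < m + 2 → w < m + 2 →
              ((fun u => if u = 0 then N else f u) v = (fun u => if u = 0 then N else f u) w
                ↔ f v = f w) := by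
            refine ker_single (p := 0) ?_ ?_ ?_
            · intro v hv hv0
              beta_reduce
              rw [if_neg hv0]
            · intro v hv hv0
              rcases (show v = 1 ∨ 2 ≤ v by omega) with rfl | hge
              · exact fun hc => hE hc.symm
              · exact hT0 v hge hv
            · intro v hv hv0
              beta_reduce
              rw [if_neg hv0, if_pos (rfl : (0 : ℕ) = 0)]
              have := hfN v hv; omega
          exact good_congr hgood
            (fun v w hv hw => (k1 v w hv hw).trans (k2 v w hv hw))

lemma even_points {p : PartitionDiagram} (hp : p ∈ Cat) : Even (p.upper + p.lower) := by
  have hM : IsPartitionCategory {q : PartitionDiagram | Even (q.upper + q.lower)} := by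
    constructor
    · show Even (1 + 1); decide
    · show Even (0 + 2); decide
    · intro p hp q hq
      have hp' : Even (p.upper + p.lower) := hp
      have hq' : Even (q.upper + q.lower) := hq
      show Even ((p.upper + q.upper) + (p.lower + q.lower))
      rw [Nat.even_iff] at hp' hq' ⊢
      omega
    · intro p hp q hq h
      have hp' : Even (p.upper + p.lower) := hp
      have hq' : Even (q.upper + q.lower) := hq
      show Even (p.upper + q.lower)
      rw [Nat.even_iff] at hp' hq' ⊢
      omega
    · intro p hp
      have hp' : Even (p.upper + p.lower) := hp
      show Even (p.lower + p.upper)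
      rw [Nat.even_iff] at hp' ⊢
      omega
    · intro p hp h
      have hp' : Even (p.upper + p.lower) := hp
      show Even ((p.upper - 1) + (p.lower + 1))
      rw [Nat.even_iff] at hp' ⊢
      omega
    · intro p hp h
      have hp' : Even (p.upper + p.lower) := hp
      show Even ((p.upper + 1) + (p.lower - 1))
      rw [Nat.even_iff] at hp' ⊢
      omega
    · intro p hp h
      have hp' : Even (p.upper + p.lower) := hp
      show Even ((p.upper - 1) + (p.lower + 1))
      rw [Nat.even_iff] at hp' ⊢
      omega
    · intro p hp h
      have hp' : Even (p.upper + p.lower) := hp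
      show Even ((p.upper + 1) + (p.lower - 1))
      rw [Nat.even_iff] at hp' ⊢
      omega
  refine Set.mem_sInter.mp hp _ ⟨hM, ?_⟩
  intro x hx
  rcases hx with rfl | rfl | rfl
  · show Even (2 + 2); decide
  · show Even (0 + 2); decide
  · show Even (0 + 4); decide

/-- The homomorphism sending every generator to the nontrivial element of `Z_2`. -/
def piHom : FreeZ2 →* Multiplicative (ZMod 2) :=
  Monoid.CoprodI.lift fun _ : ℕ => MonoidHom.id (Multiplicative (ZMod 2))

lemma pi_gen (k : ℕ) : piHom (gen k) = Multiplicative.ofAdd 1 :=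
  Monoid.CoprodI.lift_of _ _

lemma prod_const_pi {L : List FreeZ2} (h : ∀ x ∈ L, piHom x = Multiplicative.ofAdd 1) :
    piHom L.prod = Multiplicative.ofAdd ((L.length : ℕ) : ZMod 2) := by
  rw [map_list_prod]
  rw [List.prod_eq_pow_card (L.map piHom) (Multiplicative.ofAdd 1)
    (by intro x hx; obtain ⟨y, hy, rfl⟩ := List.mem_map.mp hx; exact h y hy)]
  rw [List.length_map, ← ofAdd_nsmul]
  congr 1
  rw [nsmul_eq_mul, mul_one]

lemma pi_wordOf (p : PartitionDiagram) (lab : Fin p.upper ⊕ Fin p.lower → ℕ) :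
    piHom (wordOf p lab) = Multiplicative.ofAdd (((p.lower + p.upper : ℕ)) : ZMod 2) := by
  unfold wordOf
  rw [prod_const_pi]
  · congr 1
    congr 1
    simp
  · intro x hx
    rw [List.mem_append] at hx
    rcases hx with hx | hx
    · obtain ⟨i, rfl⟩ := List.mem_ofFn.mp hx
      exact pi_gen _
    · rw [List.mem_reverse] at hx
      obtain ⟨i, rfl⟩ := List.mem_ofFn.mp hx
      exact pi_gen _

lemma exists_list_repr (g : FreeZ2) : ∃ l : List ℕ, g = (l.map gen).prod := by
  induction g using Monoid.CoprodI.induction_on with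
  | one => exact ⟨[], rfl⟩
  | of i m =>
    rcases (show m = 1 ∨ m = Multiplicative.ofAdd 1 by revert m; decide) with rfl | rfl
    · exact ⟨[], by simp⟩
    · exact ⟨[i], by simp [gen]⟩
  | mul x y hx hy =>
    obtain ⟨lx, rfl⟩ := hx
    obtain ⟨ly, rfl⟩ := hy
    exact ⟨lx ++ ly, by simp⟩

lemma pi_list (l : List ℕ) :
    piHom ((l.map gen).prod) = Multiplicative.ofAdd ((l.length : ℕ) : ZMod 2) := by
  rw [prod_const_pi]
  · rw [List.length_map]
  · intro x hx
    obtain ⟨y, hy, rfl⟩ := List.mem_map.mp hx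
    exact pi_gen _

lemma mem_Fmap_of_good {l : List ℕ} (h : Good l.length (fun v => l.getD v 0)) :
    (l.map gen).prod ∈ Fmap Cat := by
  obtain ⟨p, hp, hpu, hpl, hpr⟩ := h
  refine ⟨p, hp, ?_⟩
  obtain ⟨u, lo, rel⟩ := p
  simp only at hpu hpl
  subst hpu
  subst hpl
  refine ⟨Sum.elim (fun _ => 0) (fun j => l.getD (j : ℕ) 0), ?_, ?_⟩
  · intro x y
    rcases x with i | i
    · exact absurd (show (i : ℕ) < 0 from i.isLt) (by omega)
    rcases y with j | j
    · exact absurd (show (j : ℕ) < 0 from j.isLt) (by omega)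
    have hh := hpr (Sum.inr i) (Sum.inr j)
    simp only [enc, Sum.elim_inr] at hh ⊢
    exact hh.symm
  · show ((List.ofFn fun j : Fin l.length => gen (l.getD (j : ℕ) 0)) ++
      (List.ofFn fun i : Fin 0 => gen 0).reverse).prod = _
    rw [List.ofFn_zero, List.reverse_nil, List.append_nil]
    congr 1
    conv_rhs => rw [← List.ofFn_get l]
    rw [List.map_ofFn]
    congr 1
    funext j
    show gen (l.getD (j : ℕ) 0) = gen (l.get j)
    rw [List.getD_eq_getElem l 0 j.isLt]
    rfl

/-- For the category of partitions `C = ⟨⨯, ↑⊗↑, ⊓⊓⟩` generated by the crossing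
partition, the double singleton and the four block partition, `F(C)` is the kernel of the
homomorphism `Z_2^{*∞} → Z_2` sending every generator to the nontrivial element of `Z_2`,
and `Z_2^{*∞}/F(C) ≅ Z_2`. -/
theorem Fmap_generated_crossing_doubleSingleton_fourBlock :
    Fmap (generatedCategory
        {PartitionDiagram.crossing, PartitionDiagram.doubleSingleton,
          PartitionDiagram.fourBlock}) =
      (MonoidHom.ker
        (Monoid.CoprodI.lift fun _ : ℕ => MonoidHom.id (Multiplicative (ZMod 2))) :
          Set FreeZ2) ∧
    Nonempty ((FreeZ2 ⧸ MonoidHom.ker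
        (Monoid.CoprodI.lift fun _ : ℕ => MonoidHom.id (Multiplicative (ZMod 2)))) ≃*
      Multiplicative (ZMod 2)) := by
  have hsurj : Function.Surjective
      ⇑(Monoid.CoprodI.lift fun _ : ℕ => MonoidHom.id (Multiplicative (ZMod 2))) := by
    intro b
    exact ⟨Monoid.CoprodI.of (i := 0) b, by rw [Monoid.CoprodI.lift_of]; rfl⟩
  constructor
  · apply Set.eq_of_subset_of_subset
    · intro g hg
      obtain ⟨p, hp, lab, hlab, rfl⟩ := hg
      rw [SetLike.mem_coe, MonoidHom.mem_ker]
      show piHom (wordOf p lab) = 1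
      rw [pi_wordOf]
      have hev := even_points hp
      have hz : ((p.lower + p.upper : ℕ) : ZMod 2) = 0 := by
        rw [ZMod.natCast_eq_zero_iff]
        rw [Nat.even_iff] at hev
        omega
      rw [hz]
      rfl
    · intro g hg
      rw [SetLike.mem_coe, MonoidHom.mem_ker] at hg
      obtain ⟨l, rfl⟩ := exists_list_repr g
      have hk : piHom ((l.map gen).prod) = 1 := hg
      rw [pi_list] at hk
      have hev : Even l.length := by
        have hz := ofAdd_eq_one.mp hk
        have h2 := (ZMod.natCast_eq_zero_iff l.length 2).mp hz
        rw [Nat.even_iff]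
        omega
      exact mem_Fmap_of_good (good_all l.length hev _)
  · exact ⟨QuotientGroup.quotientKerEquivOfSurjective _ hsurj⟩
end Z2Aux
end
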